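/- arXiv:2011.08643 — 3 statements merged into one kernel-verified Lean document; each statement's English description precedes it below -/
import Mathlib

section
/- Let s, t be coprime integers greater than 1 and suppose σ and τ are both (s,t)-cores. If x is a peak for σ and τ, then x is a pinch-point for both σ and τ, i.e. L_x ⊆ β(σ), L_x ⊆ β(τ), β(σ) ∩ U_x = ∅ and β(τ) ∩ U_x = ∅. -/
/-- A partition, given as a weakly decreasing finitely-supported sequence of
natural numbers (`parts 0` is the first part). -/
structure SeqPartition where
  parts : ℕ →₀ ℕ
  antitone : ∀ ⦃i j : ℕ⦄, i ≤ j → parts j ≤ parts i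

namespace SeqPartition

/-- The size `|λ|` of a partition. -/
def size (l : SeqPartition) : ℕ := l.parts.sum fun _ v => v

/-- The beta-set `β(λ) = { λ_r − r : r ≥ 1 }` (here 0-indexed). -/
def betaSet (l : SeqPartition) : Set ℤ :=
  Set.range fun r : ℕ => (l.parts r : ℤ) - (r + 1)

/-- `RemoveHook h l m` : `m` is obtained from `l` by removing a rim `h`-hook;
in beta-set terms, an element `b` of `β(l)` is replaced by `b − h ∉ β(l)`. -/
def RemoveHook (h : ℕ) (l m : SeqPartition) : Prop :=
  ∃ b : ℤ, b ∈ l.betaSet ∧ b - (h : ℤ) ∉ l.betaSet ∧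
    m.betaSet = insert (b - (h : ℤ)) (l.betaSet \ {b})

/-- `l` is an `s`-core: no rim `s`-hook can be removed. -/
def IsCore (s : ℕ) (l : SeqPartition) : Prop := ∀ m : SeqPartition, ¬ RemoveHook s l m

/-- `c` is the `s`-core of `l`: it is obtained from `l` by repeatedly removing
rim `s`-hooks, and is itself an `s`-core. -/
def HasCore (s : ℕ) (l c : SeqPartition) : Prop :=
  Relation.ReflTransGen (RemoveHook s) l c ∧ IsCore s c

/-- `IsConj l m` : `m` is the conjugate partition of `l`. -/
def IsConj (l m : SeqPartition) : Prop :=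
  ∀ r : ℕ, m.parts r = Set.ncard {c : ℕ | r + 1 ≤ l.parts c}

end SeqPartition

/-- The region `U_x = { x + as + bt : a, b > 0 }`. -/
def UpSet (s t : ℕ) (x : ℤ) : Set ℤ :=
  {n : ℤ | ∃ a b : ℕ, 0 < a ∧ 0 < b ∧ n = x + (a : ℤ) * s + (b : ℤ) * t}

/-- The region `L_x = { x − as − bt : a, b ≥ 0 }`. -/
def LowSet (s t : ℕ) (x : ℤ) : Set ℤ :=
  {n : ℤ | ∃ a b : ℕ, n = x - (a : ℤ) * s - (b : ℤ) * t}

/-- `x` is a pinch-point for `l` : `L_x ⊆ β(l)` and `β(l) ∩ U_x = ∅`. -/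
def PinchPoint (s t : ℕ) (x : ℤ) (l : SeqPartition) : Prop :=
  LowSet s t x ⊆ l.betaSet ∧ l.betaSet ∩ UpSet s t x = ∅

/-- The generator `w_i` of the affine symmetric group `W_s` in its level-`t`
action on `ℤ` : `n ↦ n + t` if `n ≡ (i−1)t − (s−1)(t−1)/2 (mod s)`,
`n ↦ n − t` if `n ≡ it − (s−1)(t−1)/2 (mod s)`, and `n ↦ n` otherwise. -/
def wgen (s t : ℕ) (i : ℤ) : ℤ → ℤ := fun n =>
  if (s : ℤ) ∣ (n + ((s : ℤ) - 1) * ((t : ℤ) - 1) / 2 - (i - 1) * t) then n + t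
  else if (s : ℤ) ∣ (n + ((s : ℤ) - 1) * ((t : ℤ) - 1) / 2 - i * t) then n - t
  else n

/-- The monoid of maps `ℤ → ℤ` generated by the `wgen s t i`.  Since each
generator is an involution, this is the image of the level-`t` action
of the affine symmetric group `W_s` on `ℤ`. -/
def WMon (s t : ℕ) : Submonoid (Function.End ℤ) :=
  Submonoid.closure {f | ∃ i : ℤ, f = wgen s t i}

/-- `l` is `(s,t)`-minimal: no partition of smaller size has the same
`s`-core and `t`-core. -/
def MinimalPart (s t : ℕ) (l : SeqPartition) : Prop :=
  ∀ (m σ τ : SeqPartition), SeqPartition.HasCore s l σ → SeqPartition.HasCore t l τ →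
    SeqPartition.HasCore s m σ → SeqPartition.HasCore t m τ → l.size ≤ m.size

namespace SeqPartition

def gseq (l : SeqPartition) (r : ℕ) : ℤ := (l.parts r : ℤ) - (r + 1)

lemma betaSet_eq_range (l : SeqPartition) : l.betaSet = Set.range l.gseq := rfl

lemma gseq_succ (l : SeqPartition) (r : ℕ) : l.gseq (r + 1) + 1 ≤ l.gseq r := by
  have := l.antitone (Nat.le_succ r)
  simp only [gseq, Nat.succ_eq_add_one] at *
  push_cast
  omega

lemma gseq_lb (l : SeqPartition) (r : ℕ) : -(r : ℤ) - 1 ≤ l.gseq r := by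
  have : (0:ℤ) ≤ (l.parts r : ℤ) := Int.natCast_nonneg _
  simp only [gseq]; omega

lemma gseq_anti (l : SeqPartition) : StrictAnti l.gseq :=
  strictAnti_nat_of_succ_lt fun n => by have := l.gseq_succ n; omega

lemma gseq_ev (l : SeqPartition) : ∃ M : ℕ, ∀ r, M ≤ r → l.gseq r = -(r : ℤ) - 1 := by
  refine ⟨l.parts.support.sup id + 1, fun r hr => ?_⟩
  have hr' : r ∉ l.parts.support := by
    intro hmem
    have := Finset.le_sup (f := id) hmem
    simp only [id] at this
    omega
  have : l.parts r = 0 := Finsupp.notMem_support_iff.mp hr'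
  simp [gseq, this]; ring

lemma exists_partition (g : ℕ → ℤ) (hdec : ∀ r, g (r + 1) + 1 ≤ g r)
    (hlb : ∀ r : ℕ, -(r : ℤ) - 1 ≤ g r) (M : ℕ) (hev : ∀ r, M ≤ r → g r = -(r : ℤ) - 1) :
    ∃ m : SeqPartition, m.betaSet = Set.range g := by
  have hmono : ∀ ⦃i j : ℕ⦄, i ≤ j → (g j + j + 1).toNat ≤ (g i + i + 1).toNat := by
    have anti : Antitone (fun j : ℕ => g j + j) := antitone_nat_of_succ_le (by
      intro n; have := hdec n; push_cast; omega)
    intro i j hij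
    have h2 := anti hij
    simp only at h2
    exact Int.toNat_le_toNat (by omega)
  refine ⟨⟨Finsupp.onFinset (Finset.range M) (fun r => (g r + r + 1).toNat)
      (fun a ha => ?_), fun i j h => hmono h⟩, ?_⟩
  · simp only [Finset.mem_range]
    by_contra h
    apply ha
    simp only [hev a (by omega : M ≤ a)]
    simp only [Int.toNat_eq_zero]
    omega
  · unfold SeqPartition.betaSet
    refine congrArg Set.range (funext fun r => ?_)
    simp only [Finsupp.onFinset_apply]
    have h1 := hlb r
    have h2 : ((g r + r + 1).toNat : ℤ) = g r + r + 1 := Int.toNat_of_nonneg (by omega)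
    omega

lemma IsCore.sub_mem {s : ℕ} (hs : 0 < s) {l : SeqPartition} (hc : IsCore s l)
    {b : ℤ} (hb : b ∈ l.betaSet) : b - (s : ℤ) ∈ l.betaSet := by
  by_contra hbs
  set g := l.gseq with hgdef
  obtain ⟨M, hM⟩ := l.gseq_ev
  rw [← hgdef] at hM
  obtain ⟨i, hi⟩ : ∃ i, g i = b := hb
  have hginj : Function.Injective g := l.gseq_anti.injective
  have hanti : ∀ {r r' : ℕ}, r ≤ r' → g r' ≤ g r := fun h => l.gseq_anti.antitone h
  have hex : ∃ j, g j < b - s := by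
    refine ⟨M + ((s : ℤ) - b).toNat, ?_⟩
    rw [hM _ (by omega)]
    have := Int.self_le_toNat ((s : ℤ) - b)
    push_cast
    omega
  set j := Nat.find hex with hjdef
  have hj : g j < b - s := Nat.find_spec hex
  have hij : i < j := by
    by_contra h
    have := hanti (by omega : j ≤ i)
    omega
  have hgt : ∀ r, r < j → b - (s:ℤ) < g r := by
    intro r hr
    have h1 : ¬ g r < b - s := Nat.find_min hex hr
    have h2 : g r ≠ b - s := by
      intro he
      exact hbs ⟨r, he⟩
    omega
  -- zero part propagation
  have hzero : ∀ r r' : ℕ, r ≤ r' → g r = -(r:ℤ) - 1 → g r' = -(r':ℤ) - 1 := by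
    intro r r' hrr' hgr
    have h0 : l.parts r = 0 := by
      have : (l.parts r : ℤ) - (r + 1) = -(r:ℤ) - 1 := hgr
      omega
    have h0' : l.parts r' = 0 := Nat.le_zero.mp (h0 ▸ l.antitone hrr')
    show (l.parts r' : ℤ) - (r' + 1) = -(r':ℤ) - 1
    rw [h0']
    push_cast
    ring
  set g' : ℕ → ℤ := fun r =>
    if r < i then g r else if r + 1 < j then g (r + 1)
    else if r + 1 = j then b - s else g r with hg'def
  have hdec' : ∀ r, g' (r + 1) + 1 ≤ g' r := by
    intro r
    have hd1 : g (r + 1) + 1 ≤ g r := l.gseq_succ r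
    have hd2 : g (r + 1 + 1) + 1 ≤ g (r + 1) := l.gseq_succ (r + 1)
    simp only [hg'def]
    split_ifs with h1 h2 h3 h4 h5 h6 h7 h8 h9 h10 h11 h12 <;>
      first
      | omega
      | (exact hd1)
      | skip
    all_goals try { have := hgt (r+1) (by omega); omega }
    all_goals try { have hcc : g (r+1) < b - (s:ℤ) := by
                      rw [(by omega : r + 1 = j)]; exact hj
                    omega }
  have hlb' : ∀ r : ℕ, -(r : ℤ) - 1 ≤ g' r := by
    intro r
    have hl1 : -(r:ℤ) - 1 ≤ g r := l.gseq_lb r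
    have hl2 : -((r:ℤ) + 1) - 1 ≤ g (r + 1) := by
      have h : -((r + 1 : ℕ) : ℤ) - 1 ≤ g (r + 1) := l.gseq_lb (r + 1)
      push_cast at h
      omega
    simp only [hg'def]
    split_ifs with h1 h2 h3
    · exact hl1
    · -- g' r = g (r+1), middle case: show g (r+1) ≠ -(r+1)-1
      by_contra hcon
      push_neg at hcon
      have heq : g (r + 1) = -((r:ℤ) + 1) - 1 := by omega
      have hgtr := hgt (r + 1) (by omega)
      -- b - s ≤ -(r+1) - 2, so b - s = -(r'+1) for r' ≥ r + 2
      set r' : ℕ := (-(b - (s:ℤ)) - 1).toNat with hr'def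
      have hr'c : (r' : ℤ) = -(b - (s:ℤ)) - 1 := by
        rw [hr'def]
        exact Int.toNat_of_nonneg (by omega)
      have hge : r + 1 ≤ r' := by omega
      have hgr' : g r' = -(r' : ℤ) - 1 :=
        hzero (r + 1) r' hge (by push_cast at heq ⊢; omega)
      have hfin : g r' = b - (s:ℤ) := by omega
      exact hbs ⟨r', hfin⟩
    · have hl3 : -(j:ℤ) - 1 ≤ g j := l.gseq_lb j
      omega
    · exact hl1
  have hev' : ∀ r, max M j ≤ r → g' r = -(r : ℤ) - 1 := by
    intro r hr
    simp only [hg'def]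
    rw [if_neg (by omega), if_neg (by omega), if_neg (by omega)]
    exact hM r (by omega)
  obtain ⟨m, hmbeta⟩ := exists_partition g' hdec' hlb' (max M j) hev'
  apply hc m
  refine ⟨b, ⟨i, hi⟩, hbs, ?_⟩
  rw [hmbeta]
  -- range g' = insert (b - s) (betaSet \ {b})
  ext y
  simp only [Set.mem_insert_iff, Set.mem_diff, Set.mem_singleton_iff,
    betaSet_eq_range, ← hgdef]
  constructor
  · rintro ⟨r, hr⟩
    simp only [hg'def] at hr
    split_ifs at hr with h1 h2 h3
    · exact Or.inr ⟨⟨r, hr⟩, by rw [← hr, ← hi]; exact fun he => absurd (hginj he) (by omega)⟩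
    · exact Or.inr ⟨⟨r + 1, hr⟩, by rw [← hr, ← hi]; exact fun he => absurd (hginj he) (by omega)⟩
    · exact Or.inl hr.symm
    · exact Or.inr ⟨⟨r, hr⟩, by rw [← hr, ← hi]; exact fun he => absurd (hginj he) (by omega)⟩
  · rintro (hy | ⟨⟨r, hr⟩, hne⟩)
    · refine ⟨j - 1, ?_⟩
      simp only [hg'def]
      rw [if_neg (by omega), if_neg (by omega), if_pos (by omega)]
      omega
    · have hrne : r ≠ i := fun he => hne (by rw [← hr, he, hi])
      rcases lt_or_ge r i with hcase | hcase
      · exact ⟨r, by simp only [hg'def]; rw [if_pos hcase]; exact hr⟩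
      · rcases lt_or_ge r j with hcase2 | hcase2
        · refine ⟨r - 1, ?_⟩
          simp only [hg'def]
          rw [if_neg (by omega), if_pos (by omega)]
          rw [(by omega : r - 1 + 1 = r)]
          exact hr
        · refine ⟨r, ?_⟩
          simp only [hg'def]
          rw [if_neg (by omega), if_neg (by omega), if_neg (by omega)]
          exact hr

lemma sub_mul_mem {s : ℕ} (hs : 0 < s) {l : SeqPartition} (hc : IsCore s l)
    {b : ℤ} (hb : b ∈ l.betaSet) (a : ℕ) : b - (a : ℤ) * s ∈ l.betaSet := by
  induction a with
  | zero => simpa using hb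
  | succ n ih =>
      have h2 := hc.sub_mem hs ih
      have : b - ((n : ℤ) + 1) * s = b - (n:ℤ) * s - s := by ring
      push_cast
      rw [this]
      exact h2

lemma sum_classMax (s t : ℕ) (hs : 0 < s) (hst : Nat.Coprime s t) (l : SeqPartition)
    (hc : IsCore s l) (m : ℕ → ℤ)
    (hm : ∀ j : ℕ, IsGreatest {b ∈ l.betaSet | (s : ℤ) ∣ (b - (j : ℤ) * t)} (m j)) :
    ∑ j ∈ Finset.range s, m j = (∑ j ∈ Finset.range s, (((j : ℤ) * t) % s)) - (s : ℤ) ^ 2 := by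
  obtain ⟨u, v, huv⟩ : IsCoprime (s : ℤ) (t : ℤ) :=
    Int.isCoprime_iff_gcd_eq_one.mpr (by simpa using hst)
  -- covering: every integer is in some class j*t mod s with j < s
  have cover : ∀ x : ℤ, ∃ j : ℕ, j < s ∧ (s : ℤ) ∣ x - (j : ℤ) * t := by
    intro x
    refine ⟨((x * v) % s).toNat, ?_, ?_⟩
    · have h1 : (0:ℤ) ≤ (x * v) % s := Int.emod_nonneg _ (by exact_mod_cast hs.ne')
      have h2 : (x * v) % s < s := Int.emod_lt_of_pos _ (by exact_mod_cast hs)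
      omega
    · have h1 : (0:ℤ) ≤ (x * v) % s := Int.emod_nonneg _ (by exact_mod_cast hs.ne')
      rw [Int.toNat_of_nonneg h1]
      have h3 := Int.mul_ediv_add_emod (x * v) s
      refine ⟨x * u + (x * v / s) * t, ?_⟩
      have : (x * v) % s = x * v - s * (x * v / s) := by omega
      rw [this]
      linear_combination (-x) * huv
  -- distinctness of classes
  have inj : ∀ j j' : ℕ, j < s → j' < s → (s:ℤ) ∣ ((j:ℤ) - j') * t → j = j' := by
    intro j j' hj hj' hd
    have h1 : (s:ℤ) ∣ ((j:ℤ) - j') := by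
      have : ((j:ℤ) - j') = (((j:ℤ) - j') * u) * s + v * (((j:ℤ) - j') * t) := by
        linear_combination ((j:ℤ) - j') * huv.symm
      rw [this]
      exact dvd_add ⟨((j:ℤ) - j') * u, by ring⟩ (hd.mul_left v)
    have h2 : ((j:ℤ) - j') = 0 := Int.eq_zero_of_abs_lt_dvd h1 (by
      rw [abs_lt]; constructor <;> push_cast <;> omega)
    omega
  -- choose N
  obtain ⟨M, hM⟩ := l.gseq_ev
  set A : ℕ := (Finset.range s).sup (fun j => (- m j).toNat) with hA
  set N : ℕ := s * (M + A + 1) with hN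
  have hNM : M ≤ N := by
    have : 1 * (M + A + 1) ≤ s * (M + A + 1) := Nat.mul_le_mul_right _ hs
    omega
  have hsdvdN : (s:ℤ) ∣ (N:ℤ) := ⟨(M + A + 1 : ℕ), by rw [hN]; push_cast; ring⟩
  have hmN : ∀ j, j < s → 0 ≤ m j + N := by
    intro j hj
    have h1 : (- m j).toNat ≤ A := Finset.le_sup (f := fun j => (- m j).toNat) (Finset.mem_range.mpr hj)
    have h2 : - m j ≤ ((- m j).toNat : ℤ) := Int.self_le_toNat _
    have h3 : (A : ℤ) ≤ N := by
      have : 1 * (M + A + 1) ≤ s * (M + A + 1) := Nat.mul_le_mul_right _ hs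
      push_cast
      omega
    have : ((- m j).toNat : ℤ) ≤ A := by exact_mod_cast h1
    omega
  -- the finset of beta elements ≥ -N
  set F : Finset ℤ := (Finset.range N).image l.gseq with hF
  have hFcard : F.card = N := by
    rw [hF, Finset.card_image_of_injective _ l.gseq_anti.injective, Finset.card_range]
  have hFmem : ∀ y : ℤ, y ∈ F ↔ y ∈ l.betaSet ∧ -(N:ℤ) ≤ y := by
    intro y
    rw [hF, betaSet_eq_range]
    simp only [Finset.mem_image, Finset.mem_range, Set.mem_range]
    constructor
    · rintro ⟨r, hr, rfl⟩
      refine ⟨⟨r, rfl⟩, ?_⟩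
      have := l.gseq_lb r
      omega
    · rintro ⟨⟨r, hr⟩, hy⟩
      refine ⟨r, ?_, hr⟩
      by_contra h
      have := hM r (by omega)
      rw [this] at hr
      omega
  -- the pieces
  set c : ℕ → ℕ := fun j => ((m j + N) / s + 1).toNat with hcdef
  set piece : ℕ → Finset ℤ := fun j => (Finset.range (c j)).image (fun a : ℕ => m j - (a:ℤ) * s)
    with hpiece
  have hpmem : ∀ j, j < s → ∀ y : ℤ, y ∈ piece j ↔ (y ∈ l.betaSet ∧ -(N:ℤ) ≤ y) ∧ (s:ℤ) ∣ y - (j:ℤ)*t := by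
    intro j hj y
    have hmj := hm j
    have hdvd0 : (s:ℤ) ∣ m j - (j:ℤ)*t := hmj.1.2
    have hcc : ((c j : ℕ) : ℤ) = (m j + N) / s + 1 := by
      rw [hcdef]
      exact Int.toNat_of_nonneg (by
        have h0 := Int.ediv_nonneg (hmN j hj) (by positivity : (0:ℤ) ≤ s)
        omega)
    simp only [hpiece, Finset.mem_image, Finset.mem_range]
    constructor
    · rintro ⟨a, ha, rfl⟩
      have hmem : m j - (a:ℤ) * s ∈ l.betaSet := sub_mul_mem hs hc hmj.1.1 a
      have hle : (a:ℤ) ≤ (m j + N) / s := by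
        have : (a:ℤ) < (c j : ℤ) := by exact_mod_cast ha
        omega
      have : (a:ℤ) * s ≤ m j + N := (Int.le_ediv_iff_mul_le (by exact_mod_cast hs)).mp hle
      refine ⟨⟨hmem, by omega⟩, ?_⟩
      have : m j - (a:ℤ)*s - (j:ℤ)*t = (m j - (j:ℤ)*t) + (-(a:ℤ))*s := by ring
      rw [this]
      exact dvd_add hdvd0 ⟨-(a:ℤ), by ring⟩
    · rintro ⟨⟨hmem, hge⟩, hdvd⟩
      have hyle : y ≤ m j := hmj.2 ⟨hmem, hdvd⟩
      have hdvd2 : (s:ℤ) ∣ m j - y := by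
        have : m j - y = (m j - (j:ℤ)*t) - (y - (j:ℤ)*t) := by ring
        rw [this]
        exact dvd_sub hdvd0 hdvd
      obtain ⟨e, he⟩ := hdvd2
      have he' : m j - y = e * s := by linarith [he]
      have he0 : 0 ≤ e := by nlinarith [he, hyle, (by exact_mod_cast hs : (0:ℤ) < s)]
      refine ⟨e.toNat, ?_, ?_⟩
      · have : (e.toNat : ℤ) ≤ (m j + N)/s := by
          rw [Int.toNat_of_nonneg he0]
          rw [Int.le_ediv_iff_mul_le (by exact_mod_cast hs)]
          omega
        have := hcc
        omega
      · rw [Int.toNat_of_nonneg he0]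
        omega
  have hcc : ∀ j, j < s → ((c j : ℕ) : ℤ) = (m j + N) / s + 1 := by
    intro j hj
    rw [hcdef]
    exact Int.toNat_of_nonneg (by
      have h0 := Int.ediv_nonneg (hmN j hj) (by positivity : (0:ℤ) ≤ s)
      omega)
  have hFeq : F = (Finset.range s).biUnion piece := by
    ext y
    simp only [Finset.mem_biUnion, Finset.mem_range]
    rw [hFmem y]
    constructor
    · rintro ⟨hbeta, hge⟩
      obtain ⟨j, hj, hdvd⟩ := cover y
      exact ⟨j, hj, (hpmem j hj y).mpr ⟨⟨hbeta, hge⟩, hdvd⟩⟩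
    · rintro ⟨j, hj, hy⟩
      exact ((hpmem j hj y).mp hy).1
  have hdisj : ∀ j ∈ Finset.range s, ∀ j' ∈ Finset.range s, j ≠ j' →
      Disjoint (piece j) (piece j') := by
    intro j hj j' hj' hne
    rw [Finset.disjoint_left]
    intro y hy hy'
    rw [Finset.mem_range] at hj hj'
    have h1 := ((hpmem j hj y).mp hy).2
    have h2 := ((hpmem j' hj' y).mp hy').2
    have h3 : (s:ℤ) ∣ ((j:ℤ) - j') * t := by
      have : ((j:ℤ) - j') * t = (y - (j':ℤ)*t) - (y - (j:ℤ)*t) := by ring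
      rw [this]
      exact dvd_sub h2 h1
    exact hne (inj j j' hj hj' h3)
  have hcard : N = ∑ j ∈ Finset.range s, c j := by
    rw [← hFcard, hFeq, Finset.card_biUnion hdisj]
    refine Finset.sum_congr rfl fun j hj => ?_
    rw [hpiece]
    rw [Finset.card_image_of_injective _ (fun a a' ha => ?_), Finset.card_range]
    have hs' : (0:ℤ) < s := by exact_mod_cast hs
    have : (a:ℤ) = a' := by nlinarith [ha]
    exact_mod_cast this
  have hZ : (N:ℤ) = ∑ j ∈ Finset.range s, ((m j + N) / s + 1) := by
    have h1 : ((∑ j ∈ Finset.range s, c j : ℕ) : ℤ)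
        = ∑ j ∈ Finset.range s, ((m j + N) / s + 1) := by
      push_cast
      refine Finset.sum_congr rfl fun j hj => ?_
      have := hcc j (Finset.mem_range.mp hj)
      push_cast at this
      omega
    rw [← h1, ← hcard]
  have hterm : ∀ j, j < s → (s:ℤ) * ((m j + N) / s) = m j + N - (((j:ℤ) * t) % s) := by
    intro j hj
    have h1 := Int.mul_ediv_add_emod (m j + N) (s:ℤ)
    have h2 : (m j + N) % s = ((j:ℤ) * t) % s := by
      obtain ⟨w, hw⟩ := (hm j).1.2
      obtain ⟨w2, hw2⟩ := hsdvdN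
      exact Int.modEq_iff_dvd.mpr ⟨-w - w2, by linear_combination (-1) * hw + (-1) * hw2⟩
    omega
  have hfinal : (s:ℤ) * N = ∑ j ∈ Finset.range s, (m j + N - (((j:ℤ) * t) % s) + s) := by
    calc (s:ℤ) * N = (s:ℤ) * ∑ j ∈ Finset.range s, ((m j + N) / s + 1) := by rw [← hZ]
    _ = ∑ j ∈ Finset.range s, ((s:ℤ) * ((m j + N) / s) + s) := by
        rw [Finset.mul_sum]
        exact Finset.sum_congr rfl fun j hj => by ring
    _ = ∑ j ∈ Finset.range s, (m j + N - (((j:ℤ) * t) % s) + s) :=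
        Finset.sum_congr rfl fun j hj => by rw [hterm j (Finset.mem_range.mp hj)]
  have hexpand : ∑ j ∈ Finset.range s, (m j + N - (((j:ℤ) * t) % s) + s)
      = (∑ j ∈ Finset.range s, m j) + (s:ℤ) * N - (∑ j ∈ Finset.range s, (((j:ℤ) * t) % s))
        + (s:ℤ) * s := by
    rw [Finset.sum_add_distrib, Finset.sum_sub_distrib, Finset.sum_add_distrib,
      Finset.sum_const, Finset.sum_const, Finset.card_range]
    push_cast
    ring
  rw [hexpand] at hfinal
  have : (0:ℤ) = (∑ j ∈ Finset.range s, m j) - (∑ j ∈ Finset.range s, (((j:ℤ) * t) % s))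
      + (s:ℤ) * s := by linarith
  have hsq : ((s:ℤ))^2 = (s:ℤ) * s := sq (s:ℤ) ▸ rfl
  linarith [hsq]

end SeqPartition

/-- a peak for a pair of `(s,t)`-cores `σ, τ` is a pinch-point for
both.  Here `mσ j` and `mτ j` are the maxima of the beta-sets of `σ` and `τ` on
the congruence class `jt mod s`, `δ j = (mσ j − mτ j)/s`, and `k` indexes a class
maximising the partial sums `δ 0 + δ 1 + ⋯ + δ k`; the peak is `x = mτ k`. -/
theorem stmt13 (s t : ℕ) (hs : 1 < s) (ht : 1 < t) (hst : Nat.Coprime s t)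
    (σ τ : SeqPartition)
    (hσs : SeqPartition.IsCore s σ) (hσt : SeqPartition.IsCore t σ)
    (hτs : SeqPartition.IsCore s τ) (hτt : SeqPartition.IsCore t τ)
    (mσ mτ δ : ℕ → ℤ)
    (hmσ : ∀ j : ℕ, IsGreatest {b ∈ σ.betaSet | (s : ℤ) ∣ (b - (j : ℤ) * t)} (mσ j))
    (hmτ : ∀ j : ℕ, IsGreatest {b ∈ τ.betaSet | (s : ℤ) ∣ (b - (j : ℤ) * t)} (mτ j))
    (hδ : ∀ j : ℕ, (s : ℤ) * δ j = mσ j - mτ j)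
    (k : ℕ) (hk : k < s)
    (hmax : ∀ k' : ℕ, k' < s →
      (∑ j ∈ Finset.range (k' + 1), δ j) ≤ ∑ j ∈ Finset.range (k + 1), δ j)
    (x : ℤ) (hx : x = mτ k) :
    PinchPoint s t x σ ∧ PinchPoint s t x τ := by
  have hs0 : 0 < s := by omega
  have ht0 : 0 < t := by omega
  have hsZ : (0 : ℤ) < s := by exact_mod_cast hs0
  -- total sum of δ over a period is zero
  have hsumσ := SeqPartition.sum_classMax s t hs0 hst σ hσs mσ hmσ
  have hsumτ := SeqPartition.sum_classMax s t hs0 hst τ hτs mτ hmτ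
  have hsumδ : ∑ j ∈ Finset.range s, δ j = 0 := by
    have h1 : (s : ℤ) * ∑ j ∈ Finset.range s, δ j
        = ∑ j ∈ Finset.range s, (mσ j - mτ j) := by
      rw [Finset.mul_sum]
      exact Finset.sum_congr rfl fun j _ => hδ j
    rw [Finset.sum_sub_distrib, hsumσ, hsumτ] at h1
    have h2 : (s : ℤ) * ∑ j ∈ Finset.range s, δ j = 0 := by linarith
    exact (mul_eq_zero.mp h2).resolve_left (by linarith)
  have hδk : 0 ≤ δ k := by
    rcases Nat.eq_zero_or_pos k with h | h
    · subst h
      have h2 := hmax (s - 1) (by omega)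
      rw [(by omega : s - 1 + 1 = s), hsumδ] at h2
      simpa using h2
    · have h2 := hmax (k - 1) (by omega)
      rw [(by omega : k - 1 + 1 = k)] at h2
      have h3 := Finset.sum_range_succ δ k
      linarith
  have hδk1 : δ (k + 1) ≤ 0 := by
    rcases lt_or_eq_of_le (by omega : k + 1 ≤ s) with h | h
    · have h2 := hmax (k + 1) h
      have h3 := Finset.sum_range_succ δ (k + 1)
      linarith
    · -- k + 1 = s, so the class of (k+1)t is the class of 0
      have hsetper : ∀ l : SeqPartition,
          {b ∈ l.betaSet | (s : ℤ) ∣ (b - ((k + 1 : ℕ) : ℤ) * t)}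
            = {b ∈ l.betaSet | (s : ℤ) ∣ (b - ((0 : ℕ) : ℤ) * t)} := by
        intro l
        ext b
        simp only [Set.mem_setOf_eq, Nat.cast_zero, zero_mul, sub_zero, and_congr_right_iff]
        intro _
        have hkt : ((k + 1 : ℕ) : ℤ) * t = (s : ℤ) * t := by
          rw [← h]
        rw [hkt]
        constructor
        · intro hd
          have : b = (b - (s : ℤ) * t) + (s : ℤ) * t := by ring
          rw [this]
          exact dvd_add hd ⟨t, rfl⟩
        · intro hd
          exact dvd_sub hd ⟨t, rfl⟩
      have hmσper : mσ (k + 1) = mσ 0 := by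
        refine IsGreatest.unique ?_ (hmσ 0)
        rw [← hsetper σ]
        exact hmσ (k + 1)
      have hmτper : mτ (k + 1) = mτ 0 := by
        refine IsGreatest.unique ?_ (hmτ 0)
        rw [← hsetper τ]
        exact hmτ (k + 1)
      have hδper : δ (k + 1) = δ 0 := by
        have h1 := hδ (k + 1)
        have h2 := hδ 0
        rw [hmσper, hmτper] at h1
        exact mul_left_cancel₀ (by linarith : (s : ℤ) ≠ 0) (h1.trans h2.symm)
      have h2 := hmax 0 (by omega)
      rw [Finset.sum_range_one] at h2
      have h3 : ∑ j ∈ Finset.range (k + 1), δ j = 0 := by rw [h]; exact hsumδ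
      rw [hδper]
      omega
  have hxτ : x ∈ τ.betaSet := by rw [hx]; exact (hmτ k).1.1
  have hxdvd : (s : ℤ) ∣ x - (k : ℤ) * t := by rw [hx]; exact (hmτ k).1.2
  -- the maximum on the next class is at most x + t, for both partitions
  have hmτ1 : mτ (k + 1) ≤ x + t := by
    have h1 : mτ (k + 1) - t ∈ τ.betaSet := hτt.sub_mem ht0 (hmτ (k + 1)).1.1
    have h2 : (s : ℤ) ∣ (mτ (k + 1) - t) - (k : ℤ) * t := by
      obtain ⟨w, hw⟩ := (hmτ (k + 1)).1.2
      exact ⟨w, by push_cast at hw ⊢; linarith⟩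
    have h3 := (hmτ k).1  -- mτ k mem
    have h4 := (hmτ k).2 ⟨h1, h2⟩
    rw [hx]
    linarith
  have hmσ1 : mσ (k + 1) ≤ x + t := by
    have h1 := hδ (k + 1)
    have h2 : (s : ℤ) * δ (k + 1) ≤ 0 :=
      mul_nonpos_of_nonneg_of_nonpos (by linarith) hδk1
    linarith
  have hxσ : x ∈ σ.betaSet := by
    have hc : ((δ k).toNat : ℤ) * s = (s : ℤ) * δ k := by
      rw [Int.toNat_of_nonneg hδk]; ring
    have h1 : x = mσ k - ((δ k).toNat : ℤ) * s := by
      have h2 := hδ k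
      rw [hc, hx]
      linarith
    rw [h1]
    exact SeqPartition.sub_mul_mem hs0 hσs (hmσ k).1.1 _
  -- generic lower-set inclusion
  have low : ∀ l : SeqPartition, SeqPartition.IsCore s l → SeqPartition.IsCore t l →
      x ∈ l.betaSet → LowSet s t x ⊆ l.betaSet := by
    intro l hcs hct hxl n hn
    obtain ⟨a, b, hn⟩ := hn
    have h1 : x - (a : ℤ) * s ∈ l.betaSet := SeqPartition.sub_mul_mem hs0 hcs hxl a
    have h2 : x - (a : ℤ) * s - (b : ℤ) * t ∈ l.betaSet :=
      SeqPartition.sub_mul_mem ht0 hct h1 b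
    rwa [hn]
  -- generic upper-set emptiness
  have up : ∀ (l : SeqPartition) (m1 : ℤ), SeqPartition.IsCore s l → SeqPartition.IsCore t l →
      IsGreatest {b ∈ l.betaSet | (s : ℤ) ∣ (b - ((k + 1 : ℕ) : ℤ) * t)} m1 →
      m1 ≤ x + t → l.betaSet ∩ UpSet s t x = ∅ := by
    intro l m1 hcs hct hg hle
    ext y
    simp only [Set.mem_inter_iff, Set.mem_empty_iff_false, iff_false, not_and]
    intro hyβ
    rintro ⟨a, b, ha, hb, hy⟩
    obtain ⟨a', rfl⟩ : ∃ a', a = a' + 1 := ⟨a - 1, by omega⟩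
    obtain ⟨b', rfl⟩ : ∃ b', b = b' + 1 := ⟨b - 1, by omega⟩
    have h1 : y - (a' : ℤ) * s ∈ l.betaSet := SeqPartition.sub_mul_mem hs0 hcs hyβ a'
    have h2 : y - (a' : ℤ) * s - (b' : ℤ) * t ∈ l.betaSet :=
      SeqPartition.sub_mul_mem ht0 hct h1 b'
    have heq : y - (a' : ℤ) * s - (b' : ℤ) * t = x + s + t := by
      rw [hy]; push_cast; ring
    rw [heq] at h2
    have hdvd : (s : ℤ) ∣ (x + s + t) - ((k + 1 : ℕ) : ℤ) * t := by
      obtain ⟨w, hw⟩ := hxdvd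
      exact ⟨w + 1, by push_cast; linear_combination hw⟩
    have h3 := hg.2 ⟨h2, hdvd⟩
    linarith
  exact ⟨⟨low σ hσs hσt hxσ, up σ (mσ (k + 1)) hσs hσt (hmσ (k + 1)) hmσ1⟩,
    ⟨low τ hτs hτt hxτ, up τ (mτ (k + 1)) hτs hτt (hmτ (k + 1)) hmτ1⟩⟩
end

section
/- Let α, β be partitions with α₁, β₁ ≤ t and α'₁, β'₁ ≤ s. If there are exactly two s×t (0,1)-matrices with row sums α₁, …, α_s and column sums β'₁, …, β'_t, then there exists a ∈ {1, …, s−1} with α_a = α_{a+1} and β = (α₁, …, α_{a−1}, α_a + 1, α_a − 1, α_{a+2}, …). -/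
namespace Stmt14Aux

/-- A downward closed finset of `Fin n`: membership iff index < card. -/
lemma mem_iff_lt_card_of_dc {n : ℕ} (A : Finset (Fin n))
    (hdc : ∀ i i' : Fin n, i' ≤ i → i ∈ A → i' ∈ A) (i : Fin n) :
    i ∈ A ↔ (i : ℕ) < A.card := by
  constructor
  · intro hi
    by_contra h
    push_neg at h
    have hsub : Finset.Iic i ⊆ A := fun x hx => hdc i x (Finset.mem_Iic.mp hx) hi
    have := Finset.card_le_card hsub
    rw [Fin.card_Iic] at this
    omega
  · intro hi
    by_contra h
    have hsub : A ⊆ Finset.Iio i := by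
      intro x hx
      rw [Finset.mem_Iio]
      by_contra hxi
      push_neg at hxi
      exact h (hdc x i hxi hx)
    have := Finset.card_le_card hsub
    rw [Fin.card_Iio] at this
    omega

/-- Rank lemma for antitone vanishing sequences of naturals. -/
lemma nat_rank (f : ℕ → ℕ) (hf : ∀ ⦃i j : ℕ⦄, i ≤ j → f j ≤ f i) (s : ℕ) (hfs : f s = 0)
    (w : ℕ) (hw : 1 ≤ w) (i : ℕ) :
    w ≤ f i ↔ i < ((Finset.range s).filter (fun c => w ≤ f c)).card := by
  constructor
  · intro hi
    have hsub : Finset.range (i + 1) ⊆ (Finset.range s).filter (fun c => w ≤ f c) := by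
      intro c hc
      rw [Finset.mem_range] at hc
      have hfc : w ≤ f c := le_trans hi (hf (by omega))
      have hcs : c < s := by
        by_contra hcs
        push_neg at hcs
        have := hf hcs
        omega
      simp [Finset.mem_filter, Finset.mem_range, hcs, hfc]
    have := Finset.card_le_card hsub
    rw [Finset.card_range] at this
    omega
  · intro hi
    by_contra h
    push_neg at h
    have hsub : (Finset.range s).filter (fun c => w ≤ f c) ⊆ Finset.range i := by
      intro c hc
      rw [Finset.mem_filter] at hc
      rw [Finset.mem_range]
      by_contra hci
      push_neg at hci
      have := hf hci
      omega
    have := Finset.card_le_card hsub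
    rw [Finset.card_range] at this
    omega

/-- Flipping one `true` to `false` and one `false` to `true` keeps the count. -/
lemma flip_card {γ : Type*} [Fintype γ] [DecidableEq γ] (p q : γ → Bool) (j j' : γ)
    (hpj : p j = true) (hpj' : p j' = false)
    (hqj : q j = false) (hqj' : q j' = true)
    (hpq : ∀ c, c ≠ j → c ≠ j' → q c = p c) :
    (Finset.univ.filter fun c => q c = true).card
      = (Finset.univ.filter fun c => p c = true).card := by
  have hjj : j ≠ j' := by rintro rfl; rw [hpj] at hpj'; exact Bool.noConfusion hpj'
  have hset : (Finset.univ.filter fun c => q c = true)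
      = insert j' (((Finset.univ.filter fun c => p c = true)).erase j) := by
    ext c
    simp only [Finset.mem_insert, Finset.mem_erase, Finset.mem_filter, Finset.mem_univ,
      true_and]
    by_cases hc1 : c = j'
    · subst hc1; simp [hqj']
    · by_cases hc2 : c = j
      · subst hc2; simp [hqj, hjj, hc1]
      · rw [hpq c hc2 hc1]; simp [hc1, hc2]
  rw [hset]
  have hj'notmem : j' ∉ ((Finset.univ.filter fun c => p c = true)).erase j := by
    simp [Finset.mem_erase, hpj']
  have hjmem : j ∈ (Finset.univ.filter fun c => p c = true) := by simp [hpj]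
  rw [Finset.card_insert_of_notMem hj'notmem, Finset.card_erase_of_mem hjmem]
  have : 0 < (Finset.univ.filter fun c => p c = true).card := Finset.card_pos.mpr ⟨j, hjmem⟩
  omega

variable {s t : ℕ}

def rowOf (m : Fin s → Fin t → Bool) (i : Fin s) : Finset (Fin t) :=
  Finset.univ.filter fun j => m i j = true

def colOf (m : Fin s → Fin t → Bool) (j : Fin t) : Finset (Fin s) :=
  Finset.univ.filter fun i => m i j = true

lemma mem_rowOf {m : Fin s → Fin t → Bool} {i : Fin s} {j : Fin t} :
    j ∈ rowOf m i ↔ m i j = true := by simp [rowOf]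

lemma mem_colOf {m : Fin s → Fin t → Bool} {i : Fin s} {j : Fin t} :
    i ∈ colOf m j ↔ m i j = true := by simp [colOf]

/-- In a matrix whose rows are pairwise nested with antitone
row sums, an entry is `true` iff the row index is below the column sum. -/
lemma chain_mem_iff (m : Fin s → Fin t → Bool)
    (hnest : ∀ i i' : Fin s, rowOf m i ⊆ rowOf m i' ∨ rowOf m i' ⊆ rowOf m i)
    (hanti : ∀ i i' : Fin s, i ≤ i' → (rowOf m i').card ≤ (rowOf m i).card)
    (i : Fin s) (j : Fin t) : m i j = true ↔ (i : ℕ) < (colOf m j).card := by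
  have hdc : ∀ a a' : Fin s, a' ≤ a → a ∈ colOf m j → a' ∈ colOf m j := by
    intro a a' haa ha
    rw [mem_colOf] at ha ⊢
    rcases hnest a a' with h | h
    · exact mem_rowOf.mp (h (mem_rowOf.mpr ha))
    · have h1 := Finset.card_le_card h
      have h2 := hanti a' a haa
      have heq := Finset.eq_of_subset_of_card_le h h2
      have : j ∈ rowOf m a' := heq ▸ mem_rowOf.mpr ha
      exact mem_rowOf.mp this
  rw [← mem_colOf]
  exact mem_iff_lt_card_of_dc _ hdc i

def swapM (m : Fin s → Fin t → Bool) (i i' : Fin s) (j j' : Fin t) :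
    Fin s → Fin t → Bool := fun r c =>
  if r = i ∧ c = j then false
  else if r = i ∧ c = j' then true
  else if r = i' ∧ c = j then true
  else if r = i' ∧ c = j' then false
  else m r c

lemma swap_false_cells {m : Fin s → Fin t → Bool} {i i' : Fin s} {j j' : Fin t}
    (r : Fin s) (c : Fin t)
    (hf : swapM m i i' j j' r c = false) (hm : m r c = true) :
    (r = i ∧ c = j) ∨ (r = i' ∧ c = j') := by
  unfold swapM at hf
  by_cases A : r = i ∧ c = j
  · exact Or.inl A
  rw [if_neg A] at hf
  by_cases B : r = i ∧ c = j'
  · rw [if_pos B] at hf; exact absurd hf (by simp)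
  rw [if_neg B] at hf
  by_cases C : r = i' ∧ c = j
  · rw [if_pos C] at hf; exact absurd hf (by simp)
  rw [if_neg C] at hf
  by_cases D : r = i' ∧ c = j'
  · exact Or.inr D
  rw [if_neg D] at hf
  rw [hm] at hf; exact absurd hf (by simp)

lemma swap_true_cells {m : Fin s → Fin t → Bool} {i i' : Fin s} {j j' : Fin t}
    (r : Fin s) (c : Fin t)
    (hf : swapM m i i' j j' r c = true) (hm : m r c = false) :
    (r = i ∧ c = j') ∨ (r = i' ∧ c = j) := by
  unfold swapM at hf
  by_cases A : r = i ∧ c = j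
  · rw [if_pos A] at hf; exact absurd hf (by simp)
  rw [if_neg A] at hf
  by_cases B : r = i ∧ c = j'
  · exact Or.inl B
  rw [if_neg B] at hf
  by_cases C : r = i' ∧ c = j
  · exact Or.inr C
  rw [if_neg C] at hf
  by_cases D : r = i' ∧ c = j'
  · rw [if_pos D] at hf; exact absurd hf (by simp)
  rw [if_neg D] at hf
  rw [hm] at hf; exact absurd hf (by simp)

lemma swap_ne {m : Fin s → Fin t → Bool} {i i' : Fin s} {j j' : Fin t}
    (h1 : m i j = true) : swapM m i i' j j' ≠ m := by
  intro h
  have := congrFun (congrFun h i) j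
  unfold swapM at this
  simp at this
  rw [h1] at this
  exact Bool.noConfusion this

lemma swap_row_card (m : Fin s → Fin t → Bool) (i i' : Fin s) (j j' : Fin t)
    (hii : i ≠ i') (hjj : j ≠ j')
    (h1 : m i j = true) (h2 : m i j' = false)
    (h3 : m i' j = false) (h4 : m i' j' = true) (r : Fin s) :
    (Finset.univ.filter fun c => swapM m i i' j j' r c = true).card
      = (Finset.univ.filter fun c => m r c = true).card := by
  by_cases hri : r = i
  · subst hri
    exact flip_card (m r) (swapM m r i' j j' r) j j' h1 h2
      (by simp [swapM]) (by simp [swapM, hjj, Ne.symm hjj])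
      (fun c hc1 hc2 => by simp [swapM, hc1, hc2, hii])
  by_cases hri' : r = i'
  · subst hri'
    exact flip_card (m r) (swapM m i r j j' r) j' j h4 h3
      (by simp [swapM, hri, hjj, Ne.symm hjj]) (by simp [swapM, hri])
      (fun c hc1 hc2 => by simp [swapM, hc1, hc2, hri])
  · congr 1
    apply Finset.filter_congr
    intro c _
    simp [swapM, hri, hri']

lemma swap_col_card (m : Fin s → Fin t → Bool) (i i' : Fin s) (j j' : Fin t)
    (hii : i ≠ i') (hjj : j ≠ j')
    (h1 : m i j = true) (h2 : m i j' = false)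
    (h3 : m i' j = false) (h4 : m i' j' = true) (c : Fin t) :
    (Finset.univ.filter fun r => swapM m i i' j j' r c = true).card
      = (Finset.univ.filter fun r => m r c = true).card := by
  by_cases hcj : c = j
  · subst hcj
    exact flip_card (fun r => m r c) (fun r => swapM m i i' c j' r c) i i' h1 h3
      (by simp [swapM]) (by simp [swapM, hii, Ne.symm hii])
      (fun r hr1 hr2 => by simp [swapM, hr1, hr2])
  by_cases hcj' : c = j'
  · subst hcj'
    exact flip_card (fun r => m r c) (fun r => swapM m i i' j c r c) i' i h4 h2
      (by simp [swapM, hcj, hii, Ne.symm hii]) (by simp [swapM, hcj])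
      (fun r hr1 hr2 => by simp [swapM, hr1, hr2])
  · congr 1
    apply Finset.filter_congr
    intro r _
    simp [swapM, hcj, hcj']

lemma swap_inj (m : Fin s → Fin t → Bool) (i1 i1' i2 i2' : Fin s) (j1 j1' j2 j2' : Fin t)
    (hlt1 : i1 < i1') (hlt2 : i2 < i2')
    (w1 : m i2 j2 = true) (w2 : m i2 j2' = false)
    (w3 : m i2' j2 = false) (w4 : m i2' j2' = true)
    (heq : swapM m i1 i1' j1 j1' = swapM m i2 i2' j2 j2') :
    i1 = i2 ∧ i1' = i2' ∧ j1 = j2 ∧ j1' = j2' := by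
  have hii2 : i2 ≠ i2' := ne_of_lt hlt2
  have hjj2 : j2 ≠ j2' := by rintro rfl; rw [w1] at w2; exact Bool.noConfusion w2
  have e1 : swapM m i1 i1' j1 j1' i2 j2 = false := by
    rw [heq]; simp [swapM]
  rcases swap_false_cells i2 j2 e1 w1 with ⟨p, q⟩ | ⟨p, q⟩
  · have e3 : swapM m i1 i1' j1 j1' i2' j2 = true := by
      rw [heq]; simp [swapM, hii2, Ne.symm hii2]
    rcases swap_true_cells i2' j2 e3 w3 with ⟨p', q'⟩ | ⟨p', _⟩
    · exact absurd (p'.trans p.symm) (ne_of_gt hlt2)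
    · have e4 : swapM m i1 i1' j1 j1' i2 j2' = true := by
        rw [heq]; simp [swapM, hjj2, Ne.symm hjj2]
      rcases swap_true_cells i2 j2' e4 w2 with ⟨_, q''⟩ | ⟨p'', _⟩
      · exact ⟨p.symm, p'.symm, q.symm, q''.symm⟩
      · exact absurd (p.symm.trans p'') (ne_of_lt hlt1)
  · have e2 : swapM m i1 i1' j1 j1' i2' j2' = false := by
      rw [heq]; simp [swapM, hii2, Ne.symm hii2, hjj2, Ne.symm hjj2]
    rcases swap_false_cells i2' j2' e2 w4 with ⟨p', _⟩ | ⟨p', _⟩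
    · exact absurd (lt_trans (p ▸ hlt1) (p' ▸ hlt2)) (lt_irrefl _)
    · exact absurd (p.trans p'.symm) hii2

end Stmt14Aux

open Stmt14Aux in
/-- if there are exactly two `s×t` (0,1)-matrices with row sums
`α₁,…,α_s` and column sums `β'₁,…,β'_t`, then (0-indexed) there is `a` with
`a+1 < s`, `α_a = α_{a+1}` and `β = (α₀,…,α_{a−1}, α_a + 1, α_a − 1, α_{a+2},…)`. -/
theorem stmt14 (s t : ℕ) (hs : 1 < s) (ht : 1 < t)
    (α β : SeqPartition)
    (hα1 : α.parts 0 ≤ t) (hβ1 : β.parts 0 ≤ t)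
    (hαl : α.parts s = 0) (hβl : β.parts s = 0)
    (h2 : {m : Fin s → Fin t → Bool |
        (∀ i : Fin s, (Finset.univ.filter fun j : Fin t => m i j = true).card =
          α.parts (i : ℕ)) ∧
        (∀ j : Fin t, (Finset.univ.filter fun i : Fin s => m i j = true).card =
          Set.ncard {c : ℕ | (j : ℕ) + 1 ≤ β.parts c})}.ncard = 2) :
    ∃ a : ℕ, a + 1 < s ∧ α.parts a = α.parts (a + 1) ∧
      ∀ i : ℕ, β.parts i =
        if i < a then α.parts i
        else if i = a then α.parts a + 1
        else if i = a + 1 then α.parts a - 1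
        else α.parts i := by
  classical
  obtain ⟨N, hN⟩ : ∃ N : ℕ → ℕ, ∀ w, N w = Set.ncard {c : ℕ | w ≤ β.parts c} :=
    ⟨_, fun _ => rfl⟩
  obtain ⟨P, hPdef⟩ : ∃ P : (Fin s → Fin t → Bool) → Prop, ∀ x, P x ↔
      ((∀ i : Fin s, (rowOf x i).card = α.parts (i : ℕ)) ∧
       (∀ j : Fin t, (colOf x j).card = N ((j : ℕ) + 1))) :=
    ⟨_, fun _ => Iff.rfl⟩
  have h2' : {m : Fin s → Fin t → Bool | P m}.ncard = 2 := by
    have hseteq : {m : Fin s → Fin t → Bool | P m} = {m : Fin s → Fin t → Bool |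
        (∀ i : Fin s, (Finset.univ.filter fun j : Fin t => m i j = true).card =
          α.parts (i : ℕ)) ∧
        (∀ j : Fin t, (Finset.univ.filter fun i : Fin s => m i j = true).card =
          Set.ncard {c : ℕ | (j : ℕ) + 1 ≤ β.parts c})} := by
      ext x
      simp only [Set.mem_setOf_eq, hPdef, rowOf, colOf, hN]
    rw [hseteq]
    exact h2
  obtain ⟨M1, M2, hM12, hpair⟩ := Set.ncard_eq_two.mp h2'
  have hmem : ∀ x, P x ↔ (x = M1 ∨ x = M2) := by
    intro x
    have := Set.ext_iff.mp hpair x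
    simpa using this
  have hPM1 : P M1 := (hmem M1).mpr (Or.inl rfl)
  have hPM2 : P M2 := (hmem M2).mpr (Or.inr rfl)
  clear h2 h2'
  -- basic facts about N
  have hβset : ∀ w : ℕ, 1 ≤ w → {c : ℕ | w ≤ β.parts c}
      = ↑((Finset.range s).filter fun c => w ≤ β.parts c) := by
    intro w hw
    ext c
    simp only [Set.mem_setOf_eq, Finset.coe_filter, Finset.mem_range]
    constructor
    · intro h
      refine ⟨?_, h⟩
      by_contra hc
      push_neg at hc
      have := β.antitone hc
      omega
    · exact fun h => h.2
  have hNcard : ∀ w : ℕ, 1 ≤ w →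
      N w = ((Finset.range s).filter fun c => w ≤ β.parts c).card := by
    intro w hw
    rw [hN, hβset w hw, Set.ncard_coe_finset]
  have hβrank : ∀ (w i : ℕ), 1 ≤ w → (w ≤ β.parts i ↔ i < N w) := by
    intro w i hw
    rw [hNcard w hw]
    exact nat_rank β.parts β.antitone s hβl w hw i
  have hNanti : ∀ w w' : ℕ, 1 ≤ w → w ≤ w' → N w' ≤ N w := by
    intro w w' hw hww
    rw [hNcard w hw, hNcard w' (le_trans hw hww)]
    apply Finset.card_le_card
    intro c hc
    rw [Finset.mem_filter] at hc ⊢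
    exact ⟨hc.1, le_trans hww hc.2⟩
  have hNle : ∀ w : ℕ, 1 ≤ w → N w ≤ s := by
    intro w hw
    rw [hNcard w hw]
    calc ((Finset.range s).filter fun c => w ≤ β.parts c).card
        ≤ (Finset.range s).card := Finset.card_le_card (Finset.filter_subset _ _)
      _ = s := Finset.card_range s
  have hN0 : ∀ w : ℕ, t < w → N w = 0 := by
    intro w hw
    have hw1 : 1 ≤ w := by omega
    rw [hNcard w hw1, Finset.card_eq_zero, Finset.filter_eq_empty_iff]
    intro c _
    have : β.parts c ≤ β.parts 0 := β.antitone (Nat.zero_le c)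
    omega
  -- row antitone for members
  have hrowanti : ∀ x, P x → ∀ i i' : Fin s, i ≤ i' →
      (rowOf x i').card ≤ (rowOf x i).card := by
    intro x hx i i' hii
    rw [((hPdef x).mp hx).1 i, ((hPdef x).mp hx).1 i']
    exact α.antitone hii
  -- chain members are determined
  have hchain_det : ∀ x, P x →
      (∀ i i' : Fin s, rowOf x i ⊆ rowOf x i' ∨ rowOf x i' ⊆ rowOf x i) →
      ∀ (i : Fin s) (j : Fin t), x i j = true ↔ (i : ℕ) < N ((j : ℕ) + 1) := by
    intro x hx hnest i j
    rw [chain_mem_iff x hnest (hrowanti x hx) i j, ((hPdef x).mp hx).2 j]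
  -- there is a non-chain member; call it m, the other m'
  have hpick : ∃ m m', P m ∧ P m' ∧ m ≠ m' ∧ (∀ x, P x → x = m ∨ x = m') ∧
      ¬(∀ i i' : Fin s, rowOf m i ⊆ rowOf m i' ∨ rowOf m i' ⊆ rowOf m i) := by
    by_cases hc1 : ∀ i i' : Fin s, rowOf M1 i ⊆ rowOf M1 i' ∨ rowOf M1 i' ⊆ rowOf M1 i
    · refine ⟨M2, M1, hPM2, hPM1, hM12.symm, fun x hx => (hmem x).mp hx |>.symm, ?_⟩
      intro hc2
      apply hM12
      funext r c
      have e1 := hchain_det M1 hPM1 hc1 r c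
      have e2 := hchain_det M2 hPM2 hc2 r c
      by_cases h : (r : ℕ) < N ((c : ℕ) + 1)
      · rw [e1.mpr h, e2.mpr h]
      · rw [Bool.eq_false_iff.mpr (fun hh => h (e1.mp hh)),
          Bool.eq_false_iff.mpr (fun hh => h (e2.mp hh))]
    · exact ⟨M1, M2, hPM1, hPM2, hM12, fun x hx => (hmem x).mp hx, hc1⟩
  obtain ⟨m, m', hPm, hPm', hmm', hmemP, hnotchain⟩ := hpick
  push_neg at hnotchain
  obtain ⟨i0, i0', hn1, hn2⟩ := hnotchain
  obtain ⟨j0, hj0mem, hj0not⟩ := Finset.not_subset.mp hn1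
  obtain ⟨j0', hj0'mem, hj0'not⟩ := Finset.not_subset.mp hn2
  have hni : i0 ≠ i0' := by rintro rfl; exact hj0not hj0mem
  -- a quadruple with ordered rows
  have key : ∃ (a a' : Fin s) (jj jj' : Fin t), a < a' ∧
      m a jj = true ∧ m a jj' = false ∧ m a' jj = false ∧ m a' jj' = true := by
    rcases lt_or_gt_of_ne hni with h | h
    · exact ⟨i0, i0', j0, j0', h, mem_rowOf.mp hj0mem,
        Bool.eq_false_iff.mpr (fun hh => hj0'not (mem_rowOf.mpr hh)),
        Bool.eq_false_iff.mpr (fun hh => hj0not (mem_rowOf.mpr hh)),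
        mem_rowOf.mp hj0'mem⟩
    · exact ⟨i0', i0, j0', j0, h, mem_rowOf.mp hj0'mem,
        Bool.eq_false_iff.mpr (fun hh => hj0not (mem_rowOf.mpr hh)),
        Bool.eq_false_iff.mpr (fun hh => hj0'not (mem_rowOf.mpr hh)),
        mem_rowOf.mp hj0mem⟩
  obtain ⟨a, a', jj, jj', hlt, k1, k2, k3, k4⟩ := key
  -- swaps of m are members
  have hswapm' : ∀ (i i' : Fin s) (j j' : Fin t), i ≠ i' →
      m i j = true → m i j' = false → m i' j = false → m i' j' = true →
      swapM m i i' j j' = m' := by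
    intro i i' j j' hii p1 p2 p3 p4
    have hjj : j ≠ j' := by rintro rfl; rw [p1] at p2; exact Bool.noConfusion p2
    have hPs : P (swapM m i i' j j') := by
      rw [hPdef]
      constructor
      · intro r
        have := swap_row_card m i i' j j' hii hjj p1 p2 p3 p4 r
        rw [rowOf] at *
        rw [this]
        exact ((hPdef m).mp hPm).1 r
      · intro c
        have := swap_col_card m i i' j j' hii hjj p1 p2 p3 p4 c
        rw [colOf] at *
        rw [this]
        exact ((hPdef m).mp hPm).2 c
    rcases hmemP _ hPs with h | h
    · exact absurd h (swap_ne p1)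
    · exact h
  -- the quadruple is unique
  have huniq : ∀ (i i' : Fin s) (j j' : Fin t), i < i' →
      m i j = true → m i j' = false → m i' j = false → m i' j' = true →
      i = a ∧ i' = a' ∧ j = jj ∧ j' = jj' := by
    intro i i' j j' hii p1 p2 p3 p4
    have e1 := hswapm' i i' j j' (ne_of_lt hii) p1 p2 p3 p4
    have e2 := hswapm' a a' jj jj' (ne_of_lt hlt) k1 k2 k3 k4
    exact swap_inj m i i' a a' j j' jj jj' hii hlt k1 k2 k3 k4 (e1.trans e2.symm)
  -- basic facts about the distinguished quadruple
  have hjjne : jj ≠ jj' := by rintro rfl; rw [k1] at k2; exact Bool.noConfusion k2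
  have hS : ∀ i : Fin s, (rowOf m i).card = α.parts (i : ℕ) := ((hPdef m).mp hPm).1
  have hCol : ∀ j : Fin t, (colOf m j).card = N ((j : ℕ) + 1) := ((hPdef m).mp hPm).2
  -- all other pairs of rows are nested
  have hnest2 : ∀ i i' : Fin s, i < i' → ¬(i = a ∧ i' = a') →
      (rowOf m i' ⊆ rowOf m i ∨ rowOf m i ⊆ rowOf m i') := by
    intro i i' hii hne
    by_contra hcon
    push_neg at hcon
    obtain ⟨hns1, hns2⟩ := hcon
    obtain ⟨j', hj'm, hj'n⟩ := Finset.not_subset.mp hns1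
    obtain ⟨j, hjm, hjn⟩ := Finset.not_subset.mp hns2
    have := huniq i i' j j' hii (mem_rowOf.mp hjm)
      (Bool.eq_false_iff.mpr fun hh => hj'n (mem_rowOf.mpr hh))
      (Bool.eq_false_iff.mpr fun hh => hjn (mem_rowOf.mpr hh))
      (mem_rowOf.mp hj'm)
    exact hne ⟨this.1, this.2.1⟩
  have hdiff1 : rowOf m a \ rowOf m a' = {jj} := by
    apply Finset.eq_singleton_iff_unique_mem.mpr
    constructor
    · rw [Finset.mem_sdiff, mem_rowOf, mem_rowOf]
      exact ⟨k1, by rw [k3]; simp⟩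
    · intro x hx
      rw [Finset.mem_sdiff, mem_rowOf, mem_rowOf] at hx
      have := huniq a a' x jj' hlt hx.1 k2 (Bool.eq_false_iff.mpr hx.2) k4
      exact this.2.2.1
  have hdiff2 : rowOf m a' \ rowOf m a = {jj'} := by
    apply Finset.eq_singleton_iff_unique_mem.mpr
    constructor
    · rw [Finset.mem_sdiff, mem_rowOf, mem_rowOf]
      exact ⟨k4, by rw [k2]; simp⟩
    · intro x hx
      rw [Finset.mem_sdiff, mem_rowOf, mem_rowOf] at hx
      have := huniq a a' jj x hlt k1 (Bool.eq_false_iff.mpr hx.2) k3 hx.1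
      exact this.2.2.2
  have hintercard : (rowOf m a ∩ rowOf m a').card + 1 = α.parts (a : ℕ) := by
    have e1 := Finset.card_inter_add_card_sdiff (rowOf m a) (rowOf m a')
    rw [hdiff1, Finset.card_singleton, hS a] at e1
    exact e1
  have hkak : α.parts (a : ℕ) = α.parts (a' : ℕ) := by
    have e2 := Finset.card_inter_add_card_sdiff (rowOf m a') (rowOf m a)
    rw [hdiff2, Finset.card_singleton, hS a', Finset.inter_comm] at e2
    omega
  -- the two special rows are adjacent
  have hlv : (a : ℕ) < (a' : ℕ) := hlt
  have hadj : (a' : ℕ) = (a : ℕ) + 1 := by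
    by_contra hne
    have h1 : (a : ℕ) + 1 < (a' : ℕ) := by omega
    have hks : (a : ℕ) + 1 < s := lt_trans h1 a'.isLt
    set k : Fin s := ⟨(a : ℕ) + 1, hks⟩ with hk
    have hak : a < k := by rw [Fin.lt_def]; simp [hk]
    have hka' : k < a' := by rw [Fin.lt_def]; simp [hk]; omega
    have hcak : (rowOf m k).card = (rowOf m a).card := by
      rw [hS k, hS a]
      have e1 : α.parts (k : ℕ) ≤ α.parts (a : ℕ) := α.antitone (le_of_lt hak)
      have e2 : α.parts (a' : ℕ) ≤ α.parts (k : ℕ) := α.antitone (le_of_lt hka')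
      omega
    have hrka : rowOf m k = rowOf m a := by
      rcases hnest2 a k hak (fun h => hne (by
        have := congrArg Fin.val h.2; simp [hk] at this; omega)) with h | h
      · exact Finset.eq_of_subset_of_card_le h (le_of_eq hcak.symm)
      · exact (Finset.eq_of_subset_of_card_le h (le_of_eq hcak)).symm
    have hcka' : (rowOf m a').card = (rowOf m k).card := by
      rw [hS a', hS k]
      have e1 : α.parts (k : ℕ) ≤ α.parts (a : ℕ) := α.antitone (le_of_lt hak)
      have e2 : α.parts (a' : ℕ) ≤ α.parts (k : ℕ) := α.antitone (le_of_lt hka')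
      omega
    have hrka' : rowOf m k = rowOf m a' := by
      rcases hnest2 k a' hka' (fun h => by
        have := congrArg Fin.val h.1; simp [hk] at this) with h | h
      · exact (Finset.eq_of_subset_of_card_le h (le_of_eq hcka'.symm)).symm
      · exact Finset.eq_of_subset_of_card_le h (le_of_eq hcka')
    have : jj ∈ rowOf m a' := by
      rw [← hrka', hrka, mem_rowOf]; exact k1
    rw [mem_rowOf, k3] at this
    exact Bool.noConfusion this
  -- earlier rows contain both special rows
  have hjjnotin : jj ∉ rowOf m a' := by rw [mem_rowOf, k3]; simp
  have hjjin : jj ∈ rowOf m a := mem_rowOf.mpr k1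
  have hsub_lt : ∀ r : Fin s, r < a → rowOf m a ⊆ rowOf m r ∧ rowOf m a' ⊆ rowOf m r := by
    intro r hr
    have hra' : r < a' := lt_trans hr hlt
    have hrnea : r ≠ a := ne_of_lt hr
    have hcra : α.parts ((a : ℕ)) ≤ α.parts ((r : ℕ)) := α.antitone (le_of_lt hr)
    have n1 := hnest2 r a hr (fun h => hrnea h.1)
    have n2 := hnest2 r a' hra' (fun h => hrnea h.1)
    have h1 : rowOf m a ⊆ rowOf m r := by
      rcases n1 with h | h
      · exact h
      · -- rowOf m r ⊆ rowOf m a, with card r ≥ card a, so equal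
        have hc : (rowOf m a).card ≤ (rowOf m r).card := by rw [hS a, hS r]; exact hcra
        have := Finset.eq_of_subset_of_card_le h hc
        rw [← this]
    have h2 : rowOf m a' ⊆ rowOf m r := by
      rcases n2 with h | h
      · exact h
      · -- rowOf m r ⊆ rowOf m a', but rowOf m a ⊆ rowOf m r : contradiction
        exact absurd (h (h1 hjjin)) hjjnotin
    exact ⟨h1, h2⟩
  have hsub_gt : ∀ r : Fin s, a' < r → rowOf m r ⊆ rowOf m a ∧ rowOf m r ⊆ rowOf m a' := by
    intro r hr
    have har : a < r := lt_trans hlt hr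
    have hrnea' : a' ≠ r := ne_of_lt hr
    have hcar : α.parts ((r : ℕ)) ≤ α.parts ((a' : ℕ)) := α.antitone (le_of_lt hr)
    have n1 := hnest2 a r har (fun h => hrnea' h.2.symm)
    have n2 := hnest2 a' r hr (fun h => (ne_of_lt hlt) h.1.symm)
    have h2 : rowOf m r ⊆ rowOf m a' := by
      rcases n2 with h | h
      · exact h
      · -- rowOf m a' ⊆ rowOf m r with card r ≤ card a' : equal
        have hc : (rowOf m r).card ≤ (rowOf m a').card := by rw [hS r, hS a']; exact hcar
        have heq := Finset.eq_of_subset_of_card_le h hc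
        rw [← heq]
    have h1 : rowOf m r ⊆ rowOf m a := by
      rcases n1 with h | h
      · exact h
      · -- rowOf m a ⊆ rowOf m r with card r ≤ card a : equal
        have hc : (rowOf m r).card ≤ (rowOf m a).card := by
          rw [hS r, hS a]; omega
        have heq := Finset.eq_of_subset_of_card_le h hc
        rw [← heq]
    exact ⟨h1, h2⟩
  -- the nested family R obtained by replacing rows a, a' with union and intersection
  obtain ⟨R, hRdef⟩ : ∃ R : Fin s → Finset (Fin t), ∀ r, R r =
      if r = a then rowOf m a ∪ rowOf m a'
      else if r = a' then rowOf m a ∩ rowOf m a'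
      else rowOf m r := ⟨_, fun _ => rfl⟩
  obtain ⟨mR, hmRdef⟩ : ∃ mR : Fin s → Fin t → Bool, ∀ r c, mR r c = decide (c ∈ R r) :=
    ⟨_, fun _ _ => rfl⟩
  have haa' : a ≠ a' := ne_of_lt hlt
  have hRa : R a = rowOf m a ∪ rowOf m a' := by rw [hRdef]; simp
  have hRa' : R a' = rowOf m a ∩ rowOf m a' := by rw [hRdef]; simp [haa'.symm]
  have hRo : ∀ r : Fin s, r ≠ a → r ≠ a' → R r = rowOf m r := by
    intro r h1 h2; rw [hRdef]; simp [h1, h2]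
  have hrowR : ∀ r, rowOf mR r = R r := by
    intro r; ext c; rw [mem_rowOf, hmRdef]; simp
  -- R is a decreasing chain
  have hRmono : ∀ r r' : Fin s, r < r' → R r' ⊆ R r := by
    intro r r' hlt'
    by_cases hra : r = a
    · subst hra
      have hner' : r' ≠ r := (ne_of_lt hlt').symm
      by_cases h'a' : r' = a'
      · subst h'a'; rw [hRa, hRa']
        exact Finset.inter_subset_left.trans Finset.subset_union_left
      · have h'gt : a' < r' := by
          rw [Fin.lt_def] at hlt' ⊢
          have e1 : (r' : ℕ) ≠ (a' : ℕ) := fun h => h'a' (Fin.ext h)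
          omega
        rw [hRa, hRo r' hner' h'a']
        exact (hsub_gt r' h'gt).1.trans Finset.subset_union_left
    · by_cases hra' : r = a'
      · subst hra'
        have h'a : r' ≠ a := by
          intro h; subst h; exact absurd (lt_trans hlt hlt') (lt_irrefl _)
        have h'a' : r' ≠ r := (ne_of_lt hlt').symm
        rw [hRa', hRo r' h'a h'a']
        exact Finset.subset_inter (hsub_gt r' hlt').1 (hsub_gt r' hlt').2
      · by_cases h'a : r' = a
        · subst h'a
          rw [hRa, hRo r hra hra']
          exact Finset.union_subset (hsub_lt r hlt').1 (hsub_lt r hlt').2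
        · by_cases h'a' : r' = a'
          · subst h'a'
            have hrlta : r < a := by
              rw [Fin.lt_def] at hlt' ⊢
              have e1 : (r : ℕ) ≠ (a : ℕ) := fun h => hra (Fin.ext h)
              omega
            rw [hRa', hRo r hra hra']
            exact Finset.inter_subset_left.trans (hsub_lt r hrlta).1
          · rw [hRo r hra hra', hRo r' h'a h'a']
            rcases hnest2 r r' hlt' (fun h => hra h.1) with h | h
            · exact h
            · have hc : (rowOf m r').card ≤ (rowOf m r).card := by
                rw [hS, hS]; exact α.antitone (le_of_lt hlt')
              have heq := Finset.eq_of_subset_of_card_le h hc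
              rw [heq]
  have hRnest : ∀ r r' : Fin s, rowOf mR r ⊆ rowOf mR r' ∨ rowOf mR r' ⊆ rowOf mR r := by
    intro r r'; rw [hrowR, hrowR]
    rcases lt_trichotomy r r' with h | h | h
    · exact Or.inr (hRmono r r' h)
    · subst h; exact Or.inl (subset_refl _)
    · exact Or.inl (hRmono r' r h)
  have hRanti : ∀ r r' : Fin s, r ≤ r' → (rowOf mR r').card ≤ (rowOf mR r).card := by
    intro r r' h; rw [hrowR, hrowR]
    rcases eq_or_lt_of_le h with rfl | h
    · exact le_refl _
    · exact Finset.card_le_card (hRmono r r' h)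
  -- R has the same column sums as m
  have hother : ∀ (j : Fin t) (r : Fin s), r ≠ a → r ≠ a' → mR r j = m r j := by
    intro j r h1 h2
    rw [hmRdef, hRo r h1 h2]
    cases hb : m r j <;> simp [mem_rowOf, hb]
  have hRcol : ∀ j : Fin t, (colOf mR j).card = N ((j : ℕ) + 1) := by
    intro j
    rw [← hCol j]
    show (Finset.univ.filter fun i => mR i j = true).card
      = (Finset.univ.filter fun i => m i j = true).card
    have hMa : mR a j = decide (j ∈ rowOf m a ∪ rowOf m a') := by rw [hmRdef, hRa]
    have hMa' : mR a' j = decide (j ∈ rowOf m a ∩ rowOf m a') := by rw [hmRdef, hRa']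
    by_cases hP1 : m a j = true <;> by_cases hP2 : m a' j = true
    · have hall : ∀ r, mR r j = m r j := by
        intro r
        by_cases h1 : r = a
        · subst h1
          rw [hMa, hP1]
          exact decide_eq_true (Finset.mem_union_left _ (mem_rowOf.mpr hP1))
        by_cases h2 : r = a'
        · subst h2
          rw [hMa', hP2]
          exact decide_eq_true (Finset.mem_inter.mpr ⟨mem_rowOf.mpr hP1, mem_rowOf.mpr hP2⟩)
        · exact hother j r h1 h2
      congr 1
      apply Finset.filter_congr
      intro r _
      rw [hall r]
    · -- m a j true, m a' j false
      have hall : ∀ r, mR r j = m r j := by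
        intro r
        by_cases h1 : r = a
        · subst h1
          rw [hMa, hP1]
          exact decide_eq_true (Finset.mem_union_left _ (mem_rowOf.mpr hP1))
        by_cases h2 : r = a'
        · subst h2
          rw [hMa', Bool.eq_false_iff.mpr hP2]
          apply decide_eq_false
          intro hmem
          exact hP2 (mem_rowOf.mp (Finset.mem_inter.mp hmem).2)
        · exact hother j r h1 h2
      congr 1
      apply Finset.filter_congr
      intro r _
      rw [hall r]
    · -- m a j false, m a' j true : flip
      exact flip_card (fun r => m r j) (fun r => mR r j) a' a hP2
        (Bool.eq_false_iff.mpr hP1)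
        (by show mR a' j = false
            rw [hMa']
            apply decide_eq_false
            intro hmem
            exact hP1 (mem_rowOf.mp (Finset.mem_inter.mp hmem).1))
        (by show mR a j = true
            rw [hMa]
            exact decide_eq_true (Finset.mem_union_right _ (mem_rowOf.mpr hP2)))
        (fun r h1 h2 => hother j r h2 h1)
    · have hall : ∀ r, mR r j = m r j := by
        intro r
        by_cases h1 : r = a
        · subst h1
          rw [hMa, Bool.eq_false_iff.mpr hP1]
          apply decide_eq_false
          intro hmem
          rcases Finset.mem_union.mp hmem with h | h
          · exact hP1 (mem_rowOf.mp h)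
          · exact hP2 (mem_rowOf.mp h)
        by_cases h2 : r = a'
        · subst h2
          rw [hMa', Bool.eq_false_iff.mpr hP2]
          apply decide_eq_false
          intro hmem
          exact hP2 (mem_rowOf.mp (Finset.mem_inter.mp hmem).2)
        · exact hother j r h1 h2
      congr 1
      apply Finset.filter_congr
      intro r _
      rw [hall r]
  -- the target partition values
  obtain ⟨γ, hγdef⟩ : ∃ γ : ℕ → ℕ, ∀ i, γ i =
      if i < (a : ℕ) then α.parts i
      else if i = (a : ℕ) then α.parts (a : ℕ) + 1
      else if i = (a : ℕ) + 1 then α.parts (a : ℕ) - 1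
      else α.parts i := ⟨_, fun _ => rfl⟩
  have hαa_pos : 1 ≤ α.parts (a : ℕ) := by omega
  have hcardR : ∀ r : Fin s, (R r).card = γ (r : ℕ) := by
    intro r
    by_cases hra : r = a
    · rw [hra, hRa, hγdef]
      rw [if_neg (lt_irrefl _), if_pos rfl]
      have e1 : (rowOf m a' \ rowOf m a).card + (rowOf m a).card
          = (rowOf m a' ∪ rowOf m a).card := Finset.card_sdiff_add_card _ _
      rw [hdiff2, Finset.card_singleton, hS a] at e1
      rw [Finset.union_comm] at e1
      omega
    · by_cases hra' : r = a'
      · rw [hra', hRa', hγdef, hadj]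
        have e1 : ¬((a : ℕ) + 1 < (a : ℕ)) := by omega
        have e2 : ¬((a : ℕ) + 1 = (a : ℕ)) := by omega
        rw [if_neg e1, if_neg e2, if_pos rfl]
        omega
      · rw [hRo r hra hra', hγdef, hS r]
        have h1 : (r : ℕ) ≠ (a : ℕ) := fun h => hra (Fin.ext h)
        have h2 : (r : ℕ) ≠ (a : ℕ) + 1 := fun h => hra' (Fin.ext (by rw [hadj, ← h]))
        split_ifs <;> omega
  have hγ0 : ∀ i, s ≤ i → γ i = 0 := by
    intro i hi
    have ha1 := a.isLt
    have ha2 := a'.isLt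
    have e0 : ¬(i < (a : ℕ)) := by omega
    have e1 : i ≠ (a : ℕ) := by omega
    have e2 : i ≠ (a : ℕ) + 1 := by omega
    rw [hγdef, if_neg e0, if_neg e1, if_neg e2]
    have := α.antitone hi
    omega
  have hγt : ∀ i, γ i ≤ t := by
    intro i
    by_cases his : i < s
    · have := hcardR ⟨i, his⟩
      have hle : (R ⟨i, his⟩).card ≤ t := by
        calc (R ⟨i, his⟩).card ≤ (Finset.univ : Finset (Fin t)).card := Finset.card_le_univ _
          _ = t := by simp
      simp only [Fin.val_mk] at this
      omega
    · push_neg at his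
      rw [hγ0 i his]
      omega
  have hmRiff : ∀ (I : Fin s) (J : Fin t), mR I J = true ↔ (I : ℕ) < N ((J : ℕ) + 1) := by
    intro I J
    rw [chain_mem_iff mR hRnest hRanti I J, hRcol J]
  have hmemR : ∀ (I : Fin s) (c : Fin t), c ∈ R I ↔ mR I c = true := by
    intro I c; rw [hmRdef]; simp
  have hdcR : ∀ I : Fin s, ∀ c c' : Fin t, c' ≤ c → c ∈ R I → c' ∈ R I := by
    intro I c c' hcc hc
    rw [hmemR, hmRiff] at hc ⊢
    have hle : N ((c : ℕ) + 1) ≤ N ((c' : ℕ) + 1) := by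
      apply hNanti _ _ (by omega)
      have : (c' : ℕ) ≤ (c : ℕ) := hcc
      omega
    omega
  have hγrank : ∀ w i : ℕ, 1 ≤ w → (w ≤ γ i ↔ i < N w) := by
    intro w i hw
    by_cases his : i < s
    · by_cases hwt : w ≤ t
      · have hJ : w - 1 < t := by omega
        have e1 : γ i = (R ⟨i, his⟩).card := by
          have := hcardR ⟨i, his⟩; simp only [Fin.val_mk] at this; omega
        have e2 := hmemR ⟨i, his⟩ ⟨w - 1, hJ⟩
        have e3 := hmRiff ⟨i, his⟩ ⟨w - 1, hJ⟩
        have e4 := mem_iff_lt_card_of_dc (R ⟨i, his⟩) (hdcR ⟨i, his⟩) ⟨w - 1, hJ⟩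
        simp only [Fin.val_mk] at e3 e4
        have hww : w - 1 + 1 = w := by omega
        rw [hww] at e3
        constructor
        · intro h
          have hv : w - 1 < (R ⟨i, his⟩).card := by omega
          exact e3.mp (e2.mp (e4.mpr hv))
        · intro h
          have := e4.mp (e2.mpr (e3.mpr h))
          omega
      · push_neg at hwt
        have l1 : γ i ≤ t := hγt i
        have l2 : N w = 0 := hN0 w hwt
        constructor <;> (intro h; omega)
    · push_neg at his
      have l1 : γ i = 0 := hγ0 i his
      have l2 : N w ≤ s := hNle w hw
      constructor <;> (intro h; omega)
  -- conclusion
  refine ⟨(a : ℕ), ?_, ?_, ?_⟩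
  · have := a'.isLt; omega
  · rw [← hadj]; exact hkak
  · intro i
    have final : β.parts i = γ i := by
      rcases lt_trichotomy (β.parts i) (γ i) with h | h | h
      · exfalso
        have e1 : i < N (β.parts i + 1) := (hγrank (β.parts i + 1) i (by omega)).mp (by omega)
        have e2 := (hβrank (β.parts i + 1) i (by omega)).mpr e1
        omega
      · exact h
      · exfalso
        have e1 : i < N (γ i + 1) := (hβrank (γ i + 1) i (by omega)).mp (by omega)
        have e2 := (hγrank (γ i + 1) i (by omega)).mpr e1
        omega
    rw [final, hγdef i]
end

section
/- Let s, t be coprime integers greater than 1, σ and τ both (s,t)-cores, and n ∈ ℕ₀. Then |P_{σ,τ}(n)| = 1 if and only if σ = τ and n = |σ|. -/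
namespace StmtAux
open Set SeqPartition

noncomputable section

/-- the beta sequence -/
def bf (l : SeqPartition) (r : ℕ) : ℤ := (l.parts r : ℤ) - (r + 1)

lemma betaSet_eq_range (l : SeqPartition) : l.betaSet = Set.range (bf l) := rfl

lemma mem_betaSet {l : SeqPartition} {x : ℤ} : x ∈ l.betaSet ↔ ∃ r : ℕ, bf l r = x := by
  rw [betaSet_eq_range]; exact Set.mem_range

lemma bf_strictAnti (l : SeqPartition) : StrictAnti (bf l) := by
  intro r r' h
  have h2 := l.antitone h.le
  unfold bf
  have : (l.parts r' : ℤ) ≤ l.parts r := by exact_mod_cast h2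
  have : (r : ℤ) < r' := by exact_mod_cast h
  omega

lemma bf_injective (l : SeqPartition) : Function.Injective (bf l) :=
  (bf_strictAnti l).injective

/-- a bound beyond the support -/
def Nbd (l : SeqPartition) : ℕ := (l.parts.support.sup id) + 1

lemma parts_eq_zero {l : SeqPartition} {r : ℕ} (h : Nbd l ≤ r) : l.parts r = 0 := by
  by_contra hne
  have : r ∈ l.parts.support := Finsupp.mem_support_iff.mpr hne
  have := Finset.le_sup (f := id) this
  simp only [id] at this
  unfold Nbd at h
  omega

lemma bf_tail {l : SeqPartition} {r : ℕ} (h : Nbd l ≤ r) : bf l r = -(r + 1 : ℤ) := by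
  unfold bf; rw [parts_eq_zero h]; simp

lemma low_mem_betaSet {l : SeqPartition} {x : ℤ} (h : x ≤ -(Nbd l : ℤ) - 1) :
    x ∈ l.betaSet := by
  refine mem_betaSet.mpr ⟨(-x - 1).toNat, ?_⟩
  have h1 : (0 : ℤ) ≤ -x - 1 := by
    have : (0:ℤ) ≤ (Nbd l : ℤ) := Int.natCast_nonneg _
    omega
  have h2 : ((-x - 1).toNat : ℤ) = -x - 1 := Int.toNat_of_nonneg h1
  have h3 : Nbd l ≤ (-x - 1).toNat := by
    have : (Nbd l : ℤ) ≤ -x - 1 := by omega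
    omega
  rw [bf_tail h3, h2]; ring

lemma mem_betaSet_le {l : SeqPartition} {x : ℤ} (h : x ∈ l.betaSet) :
    x ≤ (l.parts 0 : ℤ) - 1 := by
  obtain ⟨r, hr⟩ := mem_betaSet.mp h
  have h2 : l.parts r ≤ l.parts 0 := l.antitone (Nat.zero_le r)
  unfold bf at hr
  have : (l.parts r : ℤ) ≤ l.parts 0 := by exact_mod_cast h2
  have : (0:ℤ) ≤ (r:ℤ) := Int.natCast_nonneg _
  omega

lemma betaSet_inter_finite (l : SeqPartition) (A : ℤ) : (l.betaSet ∩ Ici A).Finite := by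
  apply (Set.finite_Icc A ((l.parts 0 : ℤ) - 1)).subset
  rintro x ⟨hx, hx2⟩
  exact ⟨hx2, mem_betaSet_le hx⟩

/-- beta sets determine partitions -/
lemma ext_of_betaSet {l m : SeqPartition} (h : l.betaSet = m.betaSet) : l = m := by
  have key : ∀ r, bf l r = bf m r := by
    intro r
    induction r using Nat.strong_induction_on with
    | _ r ih =>
      have h1 : bf l r ∈ m.betaSet := by
        rw [← h]; exact mem_betaSet.mpr ⟨r, rfl⟩
      have h2 : bf m r ∈ l.betaSet := by
        rw [h]; exact mem_betaSet.mpr ⟨r, rfl⟩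
      obtain ⟨j, hj⟩ := mem_betaSet.mp h1
      obtain ⟨j', hj'⟩ := mem_betaSet.mp h2
      -- hj : bf m j = bf l r, hj' : bf l j' = bf m r
      have hjr : r ≤ j := by
        by_contra hlt
        push_neg at hlt
        have := ih j hlt
        have : bf l j = bf l r := by rw [this, hj]
        have := bf_injective l this
        omega
      have hj'r : r ≤ j' := by
        by_contra hlt
        push_neg at hlt
        have := ih j' hlt
        have : bf m j' = bf m r := by rw [← this, hj']
        have := bf_injective m this
        omega
      have h3 : bf l r ≤ bf m r := by
        rw [← hj]; exact (bf_strictAnti m).antitone hjr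
      have h4 : bf m r ≤ bf l r := by
        rw [← hj']; exact (bf_strictAnti l).antitone hj'r
      omega
  have hparts : l.parts = m.parts := by
    ext r
    have := key r
    unfold bf at this
    omega
  cases l; cases m; simp_all

end
end StmtAux
namespace StmtAux
open Set SeqPartition
noncomputable section

/-- the finite top part of the beta set -/
def Bfin (l : SeqPartition) (K : ℕ) : Finset ℤ := (Finset.range K).image (bf l)

lemma coe_Bfin {l : SeqPartition} {K : ℕ} (hK : Nbd l ≤ K) :
    (Bfin l K : Set ℤ) = l.betaSet ∩ Ici (-(K : ℤ)) := by
  ext x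
  simp only [Bfin, Finset.coe_image, Finset.coe_range, Set.mem_image, Set.mem_Iio,
    Set.mem_inter_iff, Set.mem_Ici]
  constructor
  · rintro ⟨r, hr, rfl⟩
    refine ⟨mem_betaSet.mpr ⟨r, rfl⟩, ?_⟩
    unfold bf
    have : (0:ℤ) ≤ (l.parts r : ℤ) := Int.natCast_nonneg _
    have : (r:ℤ) + 1 ≤ (K:ℤ) := by exact_mod_cast hr
    omega
  · rintro ⟨hx, hx2⟩
    obtain ⟨r, rfl⟩ := mem_betaSet.mp hx
    refine ⟨r, ?_, rfl⟩
    by_contra hge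
    push_neg at hge
    have h1 : Nbd l ≤ r := le_trans hK hge
    rw [bf_tail h1] at hx2
    have : (K:ℤ) ≤ (r:ℤ) := by exact_mod_cast hge
    omega

lemma card_Bfin (l : SeqPartition) (K : ℕ) : (Bfin l K).card = K := by
  rw [Bfin, Finset.card_image_of_injective _ (bf_injective l), Finset.card_range]

/-- the triangular correction term -/
def Tri (K : ℕ) : ℤ := ∑ r ∈ Finset.range K, ((r : ℤ) + 1)

lemma sum_Bfin {l : SeqPartition} {K : ℕ} (hK : Nbd l ≤ K) :
    ∑ x ∈ Bfin l K, x = (l.size : ℤ) - Tri K := by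
  rw [Bfin, Finset.sum_image (fun a _ b _ h => bf_injective l h)]
  have h1 : ∑ r ∈ Finset.range K, bf l r
      = (∑ r ∈ Finset.range K, (l.parts r : ℤ)) - Tri K := by
    rw [Tri, ← Finset.sum_sub_distrib]
    rfl
  rw [h1]
  congr 1
  have h2 : (l.size : ℤ) = ∑ r ∈ Finset.range K, (l.parts r : ℤ) := by
    have h3 : l.size = ∑ r ∈ Finset.range K, l.parts r := by
      unfold SeqPartition.size
      rw [Finsupp.sum_of_support_subset _ ?_ _ (fun i _ => rfl)]
      intro r hr
      simp only [Finset.mem_range]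
      by_contra hge
      push_neg at hge
      exact (Finsupp.mem_support_iff.mp hr) (parts_eq_zero (le_trans hK hge))
    rw [h3]; push_cast; ring
  rw [h2]

/-- size difference for a one-bead move -/
lemma sizediff {l m : SeqPartition} {a b : ℤ} (ha : a ∈ l.betaSet) (hb : b ∉ l.betaSet)
    (h : m.betaSet = insert b (l.betaSet \ {a})) :
    (m.size : ℤ) = l.size + b - a := by
  set K : ℕ := Nbd l + Nbd m + (a.natAbs + b.natAbs) with hKdef
  have hKl : Nbd l ≤ K := by omega
  have hKm : Nbd m ≤ K := by omega
  have hKa : -(K:ℤ) ≤ a := by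
    have h1 : a.natAbs ≤ K := by omega
    have h2 : ((a.natAbs : ℤ)) ≤ (K:ℤ) := by exact_mod_cast h1
    have h3 := Int.natAbs_eq a
    omega
  have hKb : -(K:ℤ) ≤ b := by
    have h1 : b.natAbs ≤ K := by omega
    have h2 : ((b.natAbs : ℤ)) ≤ (K:ℤ) := by exact_mod_cast h1
    have h3 := Int.natAbs_eq b
    omega
  have hset : (Bfin m K : Set ℤ) = (insert b ((Bfin l K).erase a) : Finset ℤ) := by
    rw [coe_Bfin hKm, h, Finset.coe_insert, Finset.coe_erase, coe_Bfin hKl]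
    ext x
    simp only [Set.mem_inter_iff, Set.mem_insert_iff, Set.mem_diff, Set.mem_singleton_iff,
      Set.mem_Ici]
    constructor
    · rintro ⟨hx1 | ⟨hx1, hx2⟩, hx3⟩
      · left; exact hx1
      · right; exact ⟨⟨hx1, hx3⟩, hx2⟩
    · rintro (rfl | ⟨⟨hx1, hx3⟩, hx2⟩)
      · exact ⟨Or.inl rfl, hKb⟩
      · exact ⟨Or.inr ⟨hx1, hx2⟩, hx3⟩
  have hfin : Bfin m K = insert b ((Bfin l K).erase a) := Finset.coe_injective hset
  have hamem : a ∈ Bfin l K := by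
    have : a ∈ (Bfin l K : Set ℤ) := by rw [coe_Bfin hKl]; exact ⟨ha, hKa⟩
    exact_mod_cast this
  have hbmem : b ∉ (Bfin l K).erase a := by
    intro hmem
    have := Finset.mem_of_mem_erase hmem
    have : b ∈ (Bfin l K : Set ℤ) := by exact_mod_cast this
    rw [coe_Bfin hKl] at this
    exact hb this.1
  have hsum : ∑ x ∈ Bfin m K, x = b + (∑ x ∈ Bfin l K, x) - a := by
    rw [hfin, Finset.sum_insert hbmem, Finset.sum_erase_eq_sub hamem]
    ring
  rw [sum_Bfin hKm, sum_Bfin hKl] at hsum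
  omega

end
end StmtAux
namespace StmtAux
open Set SeqPartition
noncomputable section

lemma gapFin {n : ℕ} (e : Fin n ≃o {x : ℤ // x ∈ (F : Finset ℤ)}) :
    ∀ (k : ℕ) (i j : Fin n), (j : ℕ) = (i : ℕ) + k → (e i : ℤ) + k ≤ (e j : ℤ) := by
  intro k
  induction k with
  | zero =>
    intro i j h
    have : i = j := Fin.ext (by omega)
    subst this; simp
  | succ k ih =>
    intro i j h
    have hj' : (i : ℕ) + k < n := by have := j.isLt; omega
    set j' : Fin n := ⟨(i : ℕ) + k, hj'⟩
    have h1 : (e i : ℤ) + k ≤ (e j' : ℤ) := ih i j' rfl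
    have h2 : (e j' : ℤ) < (e j : ℤ) := by
      have : j' < j := by
        rw [Fin.lt_def]; show (i:ℕ) + k < (j:ℕ); omega
      exact_mod_cast e.strictMono this
    push_cast
    omega

lemma exists_ofSet (S : Set ℤ) (B : ℤ) (hB : ∀ x ∈ S, x ≤ B)
    (A : ℤ) (hA : ∀ x, x ≤ A → x ∈ S) (K₀ : ℕ)
    (hcnt : ∀ K : ℕ, K₀ ≤ K → (S ∩ Ici (-(K:ℤ))).ncard = K) :
    ∃ l : SeqPartition, l.betaSet = S := by
  classical
  set Ks : ℕ := K₀ + (1 - A).toNat + 1 with hKs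
  have hKsA : -(Ks:ℤ) ≤ A - 1 := by
    have h1 : (1 - A) ≤ ((1-A).toNat : ℤ) := Int.self_le_toNat _
    have h2 : ((K₀:ℤ)) ≥ 0 := Int.natCast_nonneg _
    push_cast [hKs]
    omega
  have hfin : (S ∩ Ici (-(Ks:ℤ))).Finite := by
    apply (Set.finite_Icc (-(Ks:ℤ)) B).subset
    rintro x ⟨hx1, hx2⟩
    exact ⟨hx2, hB x hx1⟩
  set F : Finset ℤ := hfin.toFinset with hF
  have hcard : F.card = Ks := by
    rw [hF, ← Set.ncard_eq_toFinset_card _ hfin]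
    exact hcnt Ks (by omega)
  set e := F.orderIsoOfFin hcard with he
  have hKspos : 0 < Ks := by omega
  have hFmem : ∀ i, ((e i : ℤ)) ∈ S ∧ -(Ks:ℤ) ≤ (e i : ℤ) := by
    intro i
    have h0 : ((e i : ℤ)) ∈ hfin.toFinset := (e i).2
    have := hfin.mem_toFinset.mp h0
    exact ⟨this.1, this.2⟩
  have hmin : (e ⟨0, hKspos⟩ : ℤ) = -(Ks:ℤ) := by
    have hmem : (-(Ks:ℤ)) ∈ F := by
      refine hfin.mem_toFinset.mpr ⟨hA _ (by omega), Set.mem_Ici.mpr (le_refl _)⟩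
    set i := e.symm ⟨-(Ks:ℤ), hmem⟩ with hi
    have h1 : (e i : ℤ) = -(Ks:ℤ) := by rw [hi]; simp
    have h2 : (e ⟨0, hKspos⟩ : ℤ) ≤ (e i : ℤ) := by
      have : (⟨0, hKspos⟩ : Fin Ks) ≤ i := by simp [Fin.le_def]
      exact_mod_cast e.monotone this
    have h3 := (hFmem ⟨0, hKspos⟩).2
    omega
  set f : ℕ → ℤ := fun r => if h : r < Ks then (e ⟨Ks - 1 - r, by omega⟩ : ℤ) else -((r:ℤ)+1)
    with hf
  have f_lt : ∀ r (h : r < Ks), f r = (e ⟨Ks - 1 - r, by omega⟩ : ℤ) := by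
    intro r h; rw [hf]; simp [h]
  have f_ge : ∀ r, Ks ≤ r → f r = -((r:ℤ)+1) := by
    intro r h; rw [hf]; simp [Nat.not_lt.mpr h]
  have f_low : ∀ r, r < Ks → -((r:ℤ)+1) ≤ f r := by
    intro r h
    rw [f_lt r h]
    have hgap := gapFin (F := F) e (Ks - 1 - r) ⟨0, hKspos⟩ ⟨Ks - 1 - r, by omega⟩ (by simp)
    have hm := hmin
    have hc : ((Ks - 1 - r : ℕ) : ℤ) = (Ks:ℤ) - 1 - r := by
      push_cast [Nat.cast_sub (by omega : r ≤ Ks - 1), Nat.cast_sub (by omega : 1 ≤ Ks)]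
      ring
    omega
  have f_gap : ∀ i j : ℕ, i ≤ j → f j + ((j - i : ℕ) : ℤ) ≤ f i := by
    intro i j hij
    rcases Nat.lt_or_ge j Ks with hj | hj
    · have hi : i < Ks := by omega
      rw [f_lt i hi, f_lt j hj]
      have := gapFin (F := F) e (j - i) ⟨Ks - 1 - j, by omega⟩ ⟨Ks - 1 - i, by omega⟩
        (by simp; omega)
      exact this
    · rcases Nat.lt_or_ge i Ks with hi | hi
      · rw [f_ge j hj]
        have := f_low i hi
        have hc : ((j - i : ℕ) : ℤ) = (j:ℤ) - i := by
          push_cast [Nat.cast_sub hij]; ring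
        omega
      · rw [f_ge j hj, f_ge i hi]
        have hc : ((j - i : ℕ) : ℤ) = (j:ℤ) - i := by
          push_cast [Nat.cast_sub hij]; ring
        omega
  set pf : ℕ → ℕ := fun r => (f r + r + 1).toNat with hpf
  have hsupp : ∀ r, pf r ≠ 0 → r ∈ Finset.range Ks := by
    intro r h
    simp only [Finset.mem_range]
    by_contra hge
    push_neg at hge
    rw [hpf] at h
    simp only at h
    rw [f_ge r hge] at h
    simp at h
  set parts : ℕ →₀ ℕ := Finsupp.onFinset (Finset.range Ks) pf hsupp with hparts
  have hparts_apply : ∀ r, parts r = pf r := fun r => rfl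
  have hanti : ∀ ⦃i j : ℕ⦄, i ≤ j → parts j ≤ parts i := by
    intro i j hij
    rw [hparts_apply, hparts_apply, hpf]
    simp only
    apply Int.toNat_le_toNat
    have := f_gap i j hij
    have hc : ((j - i : ℕ) : ℤ) = (j:ℤ) - i := by push_cast [Nat.cast_sub hij]; ring
    omega
  refine ⟨⟨parts, hanti⟩, ?_⟩
  have hbf : ∀ r, bf ⟨parts, hanti⟩ r = f r := by
    intro r
    unfold bf
    simp only [hparts_apply, hpf]
    rcases Nat.lt_or_ge r Ks with h | h
    · have := f_low r h
      rw [Int.toNat_of_nonneg (by omega)]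
      ring
    · rw [f_ge r h]
      simp
  rw [betaSet_eq_range]
  ext x
  simp only [Set.mem_range]
  constructor
  · rintro ⟨r, rfl⟩
    rw [hbf]
    rcases Nat.lt_or_ge r Ks with h | h
    · rw [f_lt r h]; exact (hFmem _).1
    · rw [f_ge r h]
      apply hA
      have : (Ks:ℤ) ≤ (r:ℤ) := by exact_mod_cast h
      omega
  · intro hx
    rcases le_or_gt (-(Ks:ℤ)) x with h | h
    · have hmem : x ∈ F := hfin.mem_toFinset.mpr ⟨hx, h⟩
      set i := e.symm ⟨x, hmem⟩ with hi
      refine ⟨Ks - 1 - (i : ℕ), ?_⟩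
      rw [hbf, f_lt _ (by omega)]
      have h2 : (⟨Ks - 1 - (Ks - 1 - (i:ℕ)), by omega⟩ : Fin Ks) = i := by
        have := i.isLt
        exact Fin.ext (by simp only [Fin.val_mk]; omega)
      rw [h2, hi]
      simp
    · refine ⟨(-x-1).toNat, ?_⟩
      have h1 : (Ks : ℤ) ≤ -x - 1 := by omega
      have h2 : Ks ≤ (-x-1).toNat := by omega
      rw [hbf, f_ge _ h2]
      have h3 : ((-x-1).toNat : ℤ) = -x-1 := Int.toNat_of_nonneg (by omega)
      omega

end
end StmtAux
namespace StmtAux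
open Set SeqPartition
noncomputable section

lemma ncard_beta_Ici {l : SeqPartition} {K : ℕ} (hK : Nbd l ≤ K) :
    (l.betaSet ∩ Ici (-(K:ℤ))).ncard = K := by
  rw [← coe_Bfin hK, Set.ncard_coe_finset, card_Bfin]

lemma natAbs_le {x : ℤ} {K : ℕ} (h : x.natAbs ≤ K) : -(K:ℤ) ≤ x ∧ x ≤ K := by
  have h2 : ((x.natAbs : ℤ)) ≤ (K:ℤ) := by exact_mod_cast h
  have h3 := Int.natAbs_eq x
  omega

/-- one-bead move -/
lemma move1 (l : SeqPartition) {a b : ℤ} (ha : a ∈ l.betaSet) (hb : b ∉ l.betaSet) :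
    ∃ m : SeqPartition, m.betaSet = insert b (l.betaSet \ {a}) ∧
      (m.size : ℤ) = l.size + b - a := by
  have hex : ∃ m : SeqPartition, m.betaSet = insert b (l.betaSet \ {a}) := by
    apply exists_ofSet _ (max ((l.parts 0 : ℤ) - 1) b) ?_ (min (-(Nbd l:ℤ) - 1) (min a b) - 1)
      ?_ (Nbd l + a.natAbs + b.natAbs + 1) ?_
    · rintro x (rfl | ⟨hx, _⟩)
      · exact le_max_right _ _
      · exact le_trans (mem_betaSet_le hx) (le_max_left _ _)
    · intro x hx
      right
      constructor
      · exact low_mem_betaSet (by omega)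
      · simp only [Set.mem_singleton_iff]; omega
    · intro K hK
      have hKa := natAbs_le (show a.natAbs ≤ K by omega)
      have hKb := natAbs_le (show b.natAbs ≤ K by omega)
      have hseteq : insert b (l.betaSet \ {a}) ∩ Ici (-(K:ℤ))
          = insert b ((l.betaSet ∩ Ici (-(K:ℤ))) \ {a}) := by
        ext x
        simp only [Set.mem_inter_iff, Set.mem_insert_iff, Set.mem_diff,
          Set.mem_singleton_iff, Set.mem_Ici]
        constructor
        · rintro ⟨rfl | ⟨h1, h2⟩, h3⟩
          · exact Or.inl rfl
          · exact Or.inr ⟨⟨h1, h3⟩, h2⟩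
        · rintro (rfl | ⟨⟨h1, h3⟩, h2⟩)
          · exact ⟨Or.inl rfl, hKb.1⟩
          · exact ⟨Or.inr ⟨h1, h2⟩, h3⟩
      rw [hseteq]
      have hfin : (l.betaSet ∩ Ici (-(K:ℤ))).Finite := betaSet_inter_finite l _
      have hbnotin : b ∉ (l.betaSet ∩ Ici (-(K:ℤ))) \ {a} := by
        rintro ⟨⟨h1, _⟩, _⟩; exact hb h1
      have hamem : a ∈ l.betaSet ∩ Ici (-(K:ℤ)) := ⟨ha, hKa.1⟩
      rw [Set.ncard_insert_of_notMem hbnotin hfin.diff,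
        Set.ncard_diff_singleton_of_mem hamem,
        ncard_beta_Ici (show Nbd l ≤ K by omega)]
      omega
  obtain ⟨m, hm⟩ := hex
  exact ⟨m, hm, sizediff ha hb hm⟩

/-- the count of beads in a residue class above a cutoff -/
def cnt (d : ℕ) (c : ℤ) (K : ℕ) (l : SeqPartition) : ℕ :=
  (l.betaSet ∩ {x | (d:ℤ) ∣ (x - c) ∧ -(K:ℤ) ≤ x}).ncard

lemma cnt_finite (d : ℕ) (c : ℤ) (K : ℕ) (l : SeqPartition) :
    (l.betaSet ∩ {x | (d:ℤ) ∣ (x - c) ∧ -(K:ℤ) ≤ x}).Finite :=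
  (betaSet_inter_finite l (-(K:ℤ))).subset (fun x ⟨h1, h2⟩ => ⟨h1, h2.2⟩)

/-- equality of `d`-charges -/
def ChargeEq (d : ℕ) (l m : SeqPartition) : Prop :=
  ∀ c : ℤ, ∃ K₀ : ℕ, ∀ K, K₀ ≤ K → cnt d c K l = cnt d c K m

lemma chargeEq_refl (d : ℕ) (l : SeqPartition) : ChargeEq d l l :=
  fun _ => ⟨0, fun _ _ => rfl⟩

lemma chargeEq_symm {d : ℕ} {l m : SeqPartition} (h : ChargeEq d l m) : ChargeEq d m l := by
  intro c
  obtain ⟨K₀, hK⟩ := h c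
  exact ⟨K₀, fun K hKK => (hK K hKK).symm⟩

lemma chargeEq_trans {d : ℕ} {l m p : SeqPartition} (h1 : ChargeEq d l m)
    (h2 : ChargeEq d m p) : ChargeEq d l p := by
  intro c
  obtain ⟨K₁, hK1⟩ := h1 c
  obtain ⟨K₂, hK2⟩ := h2 c
  exact ⟨max K₁ K₂, fun K hK =>
    (hK1 K (le_trans (le_max_left _ _) hK)).trans (hK2 K (le_trans (le_max_right _ _) hK))⟩

/-- a single move aligned with residue class `d` preserves `d`-charges -/
lemma moveChargeEq {d : ℕ} {l m : SeqPartition} {a b : ℤ} (ha : a ∈ l.betaSet)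
    (hb : b ∉ l.betaSet) (h : m.betaSet = insert b (l.betaSet \ {a}))
    (hd : (d:ℤ) ∣ b - a) : ChargeEq d l m := by
  intro c
  refine ⟨a.natAbs + b.natAbs, fun K hK => ?_⟩
  have hKa := natAbs_le (show a.natAbs ≤ K by omega)
  have hKb := natAbs_le (show b.natAbs ≤ K by omega)
  unfold cnt
  rw [h]
  by_cases hca : (d:ℤ) ∣ (a - c)
  · have hcb : (d:ℤ) ∣ (b - c) := by
      have : b - c = (b - a) + (a - c) := by ring
      rw [this]; exact dvd_add hd hca
    have hseteq : insert b (l.betaSet \ {a}) ∩ {x | (d:ℤ) ∣ (x - c) ∧ -(K:ℤ) ≤ x}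
        = insert b ((l.betaSet ∩ {x | (d:ℤ) ∣ (x - c) ∧ -(K:ℤ) ≤ x}) \ {a}) := by
      ext x
      simp only [Set.mem_inter_iff, Set.mem_insert_iff, Set.mem_diff,
        Set.mem_singleton_iff, Set.mem_setOf_eq]
      constructor
      · rintro ⟨rfl | ⟨h1, h2⟩, h3⟩
        · exact Or.inl rfl
        · exact Or.inr ⟨⟨h1, h3⟩, h2⟩
      · rintro (rfl | ⟨⟨h1, h3⟩, h2⟩)
        · exact ⟨Or.inl rfl, hcb, hKb.1⟩
        · exact ⟨Or.inr ⟨h1, h2⟩, h3⟩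
    rw [hseteq]
    have hfin := cnt_finite d c K l
    have hbnotin : b ∉ (l.betaSet ∩ {x | (d:ℤ) ∣ (x - c) ∧ -(K:ℤ) ≤ x}) \ {a} := by
      rintro ⟨⟨h1, _⟩, _⟩; exact hb h1
    have hamem : a ∈ l.betaSet ∩ {x | (d:ℤ) ∣ (x - c) ∧ -(K:ℤ) ≤ x} := ⟨ha, hca, hKa.1⟩
    rw [Set.ncard_insert_of_notMem hbnotin hfin.diff,
      Set.ncard_diff_singleton_of_mem hamem]
    have : 0 < (l.betaSet ∩ {x | (d:ℤ) ∣ (x - c) ∧ -(K:ℤ) ≤ x}).ncard :=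
      (Set.ncard_pos hfin).mpr ⟨a, hamem⟩
    omega
  · have hcb : ¬ (d:ℤ) ∣ (b - c) := by
      intro hdvd
      have : a - c = (b - c) - (b - a) := by ring
      rw [this] at hca
      exact hca (dvd_sub hdvd hd)
    congr 1
    ext x
    constructor
    · intro hx
      have h3 : (d:ℤ) ∣ x - c ∧ -(K:ℤ) ≤ x := hx.2
      refine ⟨Set.mem_insert_iff.mpr (Or.inr ((Set.mem_diff x).mpr ⟨hx.1, ?_⟩)), h3⟩
      intro heq
      apply hca
      rw [← Set.mem_singleton_iff.mp heq]
      exact h3.1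
    · intro hx
      have h3 : (d:ℤ) ∣ x - c ∧ -(K:ℤ) ≤ x := hx.2
      rcases Set.mem_insert_iff.mp hx.1 with heq | hm
      · exfalso; apply hcb; rw [← heq]; exact h3.1
      · exact ⟨(Set.mem_diff x).mp hm |>.1, h3⟩

end
end StmtAux
namespace StmtAux
open Set SeqPartition
noncomputable section

/-- a core is exactly a partition whose beta-set is closed under subtracting d -/
lemma isCore_iff_closed {d : ℕ} {l : SeqPartition} :
    IsCore d l ↔ ∀ b ∈ l.betaSet, b - (d:ℤ) ∈ l.betaSet := by
  constructor
  · intro hcore b hb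
    by_contra hnb
    obtain ⟨m, hm, _⟩ := move1 l hb hnb
    exact hcore m ⟨b, hb, hnb, hm⟩
  · intro hclosed m ⟨b, hb, hnb, _⟩
    exact hnb (hclosed b hb)

lemma closed_iterate {d : ℕ} {l : SeqPartition}
    (h : ∀ b ∈ l.betaSet, b - (d:ℤ) ∈ l.betaSet) :
    ∀ (k : ℕ), ∀ b ∈ l.betaSet, b - (d:ℤ) * k ∈ l.betaSet := by
  intro k
  induction k with
  | zero => intro b hb; simpa using hb
  | succ k ih =>
    intro b hb
    have h2 := h _ (ih b hb)
    have heq : b - (d:ℤ) * ((k+1:ℕ):ℤ) = b - (d:ℤ) * k - d := by push_cast; ring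
    rw [heq]
    exact h2

lemma closed_descend {d : ℕ} {l : SeqPartition}
    (h : ∀ b ∈ l.betaSet, b - (d:ℤ) ∈ l.betaSet) {M y : ℤ} (hM : M ∈ l.betaSet)
    (hdvd : (d:ℤ) ∣ M - y) (hy : y ≤ M) : y ∈ l.betaSet := by
  obtain ⟨k, hk⟩ := hdvd
  have hd0 : d ≠ 0 ∨ d = 0 := Or.symm (eq_or_ne d 0)
  rcases eq_or_ne d 0 with rfl | hd0
  · simp at hk; have : y = M := by omega
    rwa [this]
  · have hk0 : 0 ≤ k := by
      have : (0:ℤ) < d := by exact_mod_cast Nat.pos_of_ne_zero hd0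
      nlinarith [hk, hy]
    have := closed_iterate h k.toNat M hM
    rw [show M - (d:ℤ) * k.toNat = y by rw [Int.toNat_of_nonneg hk0]; omega] at this
    exact this

/-- the maximum element of a residue class in a beta-set -/
lemma exists_max_class (l : SeqPartition) {D : ℕ} (hD : 0 < D) (c : ℤ) :
    ∃ M, M ∈ l.betaSet ∧ (D:ℤ) ∣ (M - c) ∧
      ∀ y ∈ l.betaSet, (D:ℤ) ∣ (y - c) → y ≤ M := by
  set x₀ : ℤ := c - D * ((c + Nbd l + 1).toNat + 1) with hx₀
  have hx₀mem : x₀ ∈ l.betaSet := by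
    apply low_mem_betaSet
    have h1 : (1:ℤ) ≤ (D:ℤ) := by exact_mod_cast hD
    have h2 : c + Nbd l + 1 ≤ ((c + Nbd l + 1).toNat : ℤ) := Int.self_le_toNat _
    have h3 : (0:ℤ) ≤ ((c + Nbd l + 1).toNat : ℤ) := Int.natCast_nonneg _
    rw [hx₀]
    nlinarith
  have hx₀dvd : (D:ℤ) ∣ (x₀ - c) := ⟨-(((c + Nbd l + 1).toNat : ℤ) + 1), by rw [hx₀]; ring⟩
  have hfin : (l.betaSet ∩ {y | (D:ℤ) ∣ (y - c) ∧ x₀ ≤ y}).Finite :=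
    (betaSet_inter_finite l x₀).subset (fun y ⟨h1, h2⟩ => ⟨h1, h2.2⟩)
  have hne : (l.betaSet ∩ {y | (D:ℤ) ∣ (y - c) ∧ x₀ ≤ y}).Nonempty :=
    ⟨x₀, hx₀mem, hx₀dvd, le_refl _⟩
  obtain ⟨M, hMmem, hMmax⟩ := Set.Finite.exists_maximalFor id _ hfin hne
  refine ⟨M, hMmem.1, hMmem.2.1, ?_⟩
  intro y hy hydvd
  rcases le_or_gt y M with h | h
  · exact h
  · have hymem : y ∈ l.betaSet ∩ {y | (D:ℤ) ∣ (y - c) ∧ x₀ ≤ y} :=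
      ⟨hy, hydvd, le_trans hMmem.2.2 h.le⟩
    have := hMmax hymem (le_of_lt h)
    simp only [id] at this
    omega

/-- two cores with equal charges are equal -/
lemma core_eq_of_chargeEq {D : ℕ} (hD : 0 < D) {l m : SeqPartition}
    (hl : ∀ b ∈ l.betaSet, b - (D:ℤ) ∈ l.betaSet)
    (hm : ∀ b ∈ m.betaSet, b - (D:ℤ) ∈ m.betaSet)
    (hc : ChargeEq D l m) : l = m := by
  have key : ∀ c : ℤ, ∀ Ml Mm : ℤ,
      Ml ∈ l.betaSet → (D:ℤ) ∣ (Ml - c) → (∀ y ∈ l.betaSet, (D:ℤ) ∣ (y - c) → y ≤ Ml) →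
      Mm ∈ m.betaSet → (D:ℤ) ∣ (Mm - c) → (∀ y ∈ m.betaSet, (D:ℤ) ∣ (y - c) → y ≤ Mm) →
      Ml = Mm := by
    intro c Ml Mm hMl hMld hMlmax hMm hMmd hMmmax
    by_contra hne
    obtain ⟨K₀, hK⟩ := hc c
    set K : ℕ := K₀ + Ml.natAbs + Mm.natAbs with hKdef
    have hcnt := hK K (by omega)
    have hKMl := natAbs_le (show Ml.natAbs ≤ K by omega)
    have hKMm := natAbs_le (show Mm.natAbs ≤ K by omega)
    have hdesc : ∀ (p : SeqPartition) (Mp : ℤ), Mp ∈ p.betaSet → (D:ℤ) ∣ (Mp - c) →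
        (∀ y ∈ p.betaSet, (D:ℤ) ∣ (y - c) → y ≤ Mp) →
        (∀ b ∈ p.betaSet, b - (D:ℤ) ∈ p.betaSet) → -(K:ℤ) ≤ Mp →
        p.betaSet ∩ {x | (D:ℤ) ∣ (x - c) ∧ -(K:ℤ) ≤ x}
          = {x | (D:ℤ) ∣ (x - c) ∧ -(K:ℤ) ≤ x ∧ x ≤ Mp} := by
      intro p Mp hMp hMpd hMpmax hpcl hKMp
      ext x
      simp only [Set.mem_inter_iff, Set.mem_setOf_eq]
      constructor
      · rintro ⟨h1, h2, h3⟩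
        exact ⟨h2, h3, hMpmax x h1 h2⟩
      · rintro ⟨h1, h2, h3⟩
        refine ⟨closed_descend hpcl hMp ?_ h3, h1, h2⟩
        have : Mp - x = (Mp - c) - (x - c) := by ring
        rw [this]
        exact dvd_sub hMpd h1
    have hsl := hdesc l Ml hMl hMld hMlmax hl hKMl.1
    have hsm := hdesc m Mm hMm hMmd hMmmax hm hKMm.1
    unfold cnt at hcnt
    rw [hsl, hsm] at hcnt
    -- wlog Ml < Mm
    have hmain : ∀ Ma Mb : ℤ, Ma < Mb → (D:ℤ) ∣ (Ma - c) → (D:ℤ) ∣ (Mb - c) →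
        -(K:ℤ) ≤ Ma → -(K:ℤ) ≤ Mb →
        ({x | (D:ℤ) ∣ (x - c) ∧ -(K:ℤ) ≤ x ∧ x ≤ Ma}).ncard
          < ({x | (D:ℤ) ∣ (x - c) ∧ -(K:ℤ) ≤ x ∧ x ≤ Mb}).ncard := by
      intro Ma Mb hab hda hdb hKa hKb
      apply Set.ncard_lt_ncard
      · constructor
        · rintro x ⟨h1, h2, h3⟩; exact ⟨h1, h2, le_trans h3 hab.le⟩
        · intro hsub
          obtain ⟨_, _, hle⟩ := hsub ⟨hdb, hKb, le_refl _⟩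
          omega
      · apply (Set.finite_Icc (-(K:ℤ)) Mb).subset
        rintro x ⟨_, h2, h3⟩
        exact ⟨h2, h3⟩
    rcases lt_trichotomy Ml Mm with h | h | h
    · exact absurd hcnt (Nat.ne_of_lt (hmain Ml Mm h hMld hMmd hKMl.1 hKMm.1))
    · exact hne h
    · exact absurd hcnt.symm (Nat.ne_of_lt (hmain Mm Ml h hMmd hMld hKMm.1 hKMl.1))
  apply ext_of_betaSet
  ext x
  obtain ⟨Ml, hMl, hMld, hMlmax⟩ := exists_max_class l hD x
  obtain ⟨Mm, hMm, hMmd, hMmmax⟩ := exists_max_class m hD x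
  have hMeq : Ml = Mm := key x Ml Mm hMl hMld hMlmax hMm hMmd hMmmax
  constructor
  · intro hx
    exact closed_descend hm hMm hMmd (le_trans (hMlmax x hx ⟨0, by ring⟩) (le_of_eq hMeq))
  · intro hx
    exact closed_descend hl hMl hMld (le_trans (hMmmax x hx ⟨0, by ring⟩) (le_of_eq hMeq.symm))

end
end StmtAux
namespace StmtAux
open Set SeqPartition
noncomputable section

lemma removeHook_size {d : ℕ} {l m : SeqPartition} (h : RemoveHook d l m) :
    (m.size : ℤ) = l.size - d := by
  obtain ⟨b, hb, hnb, hm⟩ := h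
  have := sizediff hb hnb hm
  omega

lemma removeHook_chargeEq {d e : ℕ} (hde : (e:ℤ) ∣ (d:ℤ)) {l m : SeqPartition}
    (h : RemoveHook d l m) : ChargeEq e l m := by
  obtain ⟨b, hb, hnb, hm⟩ := h
  exact moveChargeEq hb hnb hm (by
    have : b - (d:ℤ) - b = -(d:ℤ) := by ring
    rw [this]
    exact Dvd.dvd.neg_right hde)

lemma chain_chargeEq {d e : ℕ} (hde : (e:ℤ) ∣ (d:ℤ)) {l m : SeqPartition}
    (h : Relation.ReflTransGen (RemoveHook d) l m) : ChargeEq e l m := by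
  induction h with
  | refl => exact chargeEq_refl _ _
  | tail _ hstep ih => exact chargeEq_trans ih (removeHook_chargeEq hde hstep)

lemma chain_size {d : ℕ} (hd : 0 < d) {l m : SeqPartition}
    (h : Relation.ReflTransGen (RemoveHook d) l m) :
    m.size ≤ l.size ∧ (m.size = l.size → m = l) := by
  induction h using Relation.ReflTransGen.head_induction_on with
  | refl => exact ⟨le_refl _, fun _ => rfl⟩
  | head hstep _ ih =>
    rename_i a c _
    have h1 := removeHook_size hstep
    have h2 : c.size < a.size := by omega
    exact ⟨by omega, fun hsz => by omega⟩

/-- every partition has a d-core -/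
lemma exists_hasCore (d : ℕ) (hd : 0 < d) (l : SeqPartition) : ∃ c, HasCore d l c := by
  generalize hn : l.size = n
  induction n using Nat.strong_induction_on generalizing l with
  | _ n ih =>
    by_cases hcore : IsCore d l
    · exact ⟨l, Relation.ReflTransGen.refl, hcore⟩
    · unfold IsCore at hcore
      push_neg at hcore
      obtain ⟨m, hm⟩ := hcore
      have hsz := removeHook_size hm
      have hlt : m.size < n := by omega
      obtain ⟨c, hc1, hc2⟩ := ih m.size hlt m rfl
      exact ⟨c, Relation.ReflTransGen.head hm hc1, hc2⟩

/-- KEY: characterization of HasCore via charges -/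
lemma hasCore_iff_chargeEq {d : ℕ} (hd : 0 < d) {l σ : SeqPartition} (hσ : IsCore d σ) :
    HasCore d l σ ↔ ChargeEq d l σ := by
  constructor
  · intro ⟨hchain, _⟩
    exact chain_chargeEq (dvd_refl _) hchain
  · intro hchg
    obtain ⟨c, hc⟩ := exists_hasCore d hd l
    have h1 : ChargeEq d l c := chain_chargeEq (dvd_refl _) hc.1
    have h2 : ChargeEq d c σ := chargeEq_trans (chargeEq_symm h1) hchg
    have h3 : c = σ := core_eq_of_chargeEq hd (isCore_iff_closed.mp hc.2)
      (isCore_iff_closed.mp hσ) h2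
    rwa [h3] at hc

end
end StmtAux
namespace StmtAux
open Set SeqPartition
noncomputable section

lemma int_nonneg_of_mul {D a : ℤ} (hD : 0 < D) (h : 0 ≤ D * a) : 0 ≤ a := by
  by_contra hn; push_neg at hn
  have := mul_neg_of_pos_of_neg hD hn; omega

lemma int_nonpos_of_mul {D a : ℤ} (hD : 0 < D) (h : D * a ≤ 0) : a ≤ 0 := by
  by_contra hn; push_neg at hn
  have := mul_pos hD hn; omega

lemma int_lt_of_mul_lt {D a b : ℤ} (hD : 0 < D) (h : D * a < D * b) : a < b :=
  lt_of_mul_lt_mul_left h hD.le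

lemma ncard_progression {D : ℕ} (hD : 0 < D) {u v : ℤ} (hdvd : (D:ℤ) ∣ v - u)
    (huv : u ≤ v) :
    ({x : ℤ | (D:ℤ) ∣ (x - v) ∧ u < x ∧ x ≤ v}).ncard = ((v - u)/D).toNat := by
  obtain ⟨k, hk⟩ := hdvd
  have hDpos : (0:ℤ) < D := by exact_mod_cast hD
  have hk0 : 0 ≤ k := int_nonneg_of_mul hDpos (by omega)
  have hdiv : (v - u)/D = k := by rw [hk]; exact Int.mul_ediv_cancel_left _ (by omega)
  rw [hdiv]
  have hset : {x : ℤ | (D:ℤ) ∣ (x - v) ∧ u < x ∧ x ≤ v}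
      = ↑((Finset.range k.toNat).image (fun j : ℕ => v - (D:ℤ) * j)) := by
    ext x
    simp only [Finset.coe_image, Finset.coe_range, Set.mem_image, Set.mem_Iio,
      Set.mem_setOf_eq]
    constructor
    · rintro ⟨⟨m, hm⟩, h2, h3⟩
      have hm0 : m ≤ 0 := int_nonpos_of_mul hDpos (by omega)
      have hmk : -k < m := by
        apply int_lt_of_mul_lt hDpos
        have : (D:ℤ) * (-k) = -((D:ℤ) * k) := by ring
        omega
      refine ⟨(-m).toNat, by omega, ?_⟩
      have hc : ((-m).toNat : ℤ) = -m := Int.toNat_of_nonneg (by omega)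
      rw [hc, mul_neg]
      omega
    · rintro ⟨j, hj, rfl⟩
      have hj' : (j:ℤ) < k := by omega
      have h1 : (D:ℤ) * j < D * k := by
        apply mul_lt_mul_of_pos_left hj' hDpos
      have h2 : (0:ℤ) ≤ D * j := mul_nonneg hDpos.le (Int.natCast_nonneg _)
      exact ⟨⟨-(j:ℤ), by ring⟩, by omega, by omega⟩
  rw [hset, Set.ncard_coe_finset, Finset.card_image_of_injective, Finset.card_range]
  intro i j hij
  simp only at hij
  have h1 : (D:ℤ) * i = D * j := by omega
  have := mul_left_cancel₀ (show (D:ℤ) ≠ 0 by omega) h1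
  exact_mod_cast this

lemma prog_finite (D : ℕ) (M : ℤ) (A M' : ℤ) :
    ({x : ℤ | (D:ℤ) ∣ (x - M) ∧ A ≤ x ∧ x ≤ M'}).Finite :=
  (Set.finite_Icc A M').subset (fun x ⟨_, h2, h3⟩ => ⟨h2, h3⟩)

lemma ncard_prog_step {D : ℕ} (hD : 0 < D) {A M M' : ℤ} (h : (D:ℤ) ∣ M' - M)
    (hAM : A ≤ M) (hMM' : M ≤ M') :
    ({x : ℤ | (D:ℤ) ∣ (x - M) ∧ A ≤ x ∧ x ≤ M'}).ncard
      = ({x : ℤ | (D:ℤ) ∣ (x - M) ∧ A ≤ x ∧ x ≤ M}).ncard + ((M' - M)/D).toNat := by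
  have hsplit : {x : ℤ | (D:ℤ) ∣ (x - M) ∧ A ≤ x ∧ x ≤ M'}
      = {x : ℤ | (D:ℤ) ∣ (x - M) ∧ A ≤ x ∧ x ≤ M}
        ∪ {x : ℤ | (D:ℤ) ∣ (x - M') ∧ M < x ∧ x ≤ M'} := by
    obtain ⟨k, hk⟩ := h
    ext x
    simp only [Set.mem_union, Set.mem_setOf_eq]
    constructor
    · rintro ⟨h1, h2, h3⟩
      rcases le_or_gt x M with h4 | h4
      · exact Or.inl ⟨h1, h2, h4⟩
      · refine Or.inr ⟨?_, h4, h3⟩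
        obtain ⟨m, hm⟩ := h1
        refine ⟨m - k, by rw [mul_sub]; omega⟩
    · rintro (⟨h1, h2, h3⟩ | ⟨h1, h2, h3⟩)
      · exact ⟨h1, h2, le_trans h3 hMM'⟩
      · obtain ⟨m, hm⟩ := h1
        exact ⟨⟨m + k, by rw [mul_add]; omega⟩, by omega, h3⟩
  rw [hsplit, Set.ncard_union_eq ?_ (prog_finite D M A M) ?_,
    ncard_progression hD h hMM']
  · rw [Set.disjoint_left]
    rintro x ⟨_, _, h3⟩ ⟨_, h4, _⟩
    omega
  · exact (Set.finite_Icc M M').subset (fun x ⟨_, h2, h3⟩ => ⟨h2.le, h3⟩)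

/-- signed difference version -/
lemma ncard_prog_diff {D : ℕ} (hD : 0 < D) {A M M' : ℤ} (h : (D:ℤ) ∣ M' - M)
    (hAM : A ≤ M) (hAM' : A ≤ M') :
    (({x : ℤ | (D:ℤ) ∣ (x - M) ∧ A ≤ x ∧ x ≤ M'}).ncard : ℤ)
      - ({x : ℤ | (D:ℤ) ∣ (x - M) ∧ A ≤ x ∧ x ≤ M}).ncard = (M' - M)/D := by
  have hDpos : (0:ℤ) < D := by exact_mod_cast hD
  rcases le_or_gt M M' with hle | hlt
  · rw [ncard_prog_step hD h hAM hle]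
    obtain ⟨k, hk⟩ := h
    have hk0 : 0 ≤ k := int_nonneg_of_mul hDpos (by omega)
    have hdiv : (M' - M)/D = k := by rw [hk]; exact Int.mul_ediv_cancel_left _ (by omega)
    rw [hdiv]
    omega
  · have h' : (D:ℤ) ∣ M - M' := by
      obtain ⟨k, hk⟩ := h; exact ⟨-k, by rw [mul_neg]; omega⟩
    obtain ⟨k, hk⟩ := h
    have hsame : ∀ B : ℤ, {x : ℤ | (D:ℤ) ∣ (x - M') ∧ A ≤ x ∧ x ≤ B}
        = {x : ℤ | (D:ℤ) ∣ (x - M) ∧ A ≤ x ∧ x ≤ B} := by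
      intro B
      ext x
      simp only [Set.mem_setOf_eq]
      constructor
      · rintro ⟨⟨m, hm⟩, h2, h3⟩
        exact ⟨⟨m + k, by rw [mul_add]; omega⟩, h2, h3⟩
      · rintro ⟨⟨m, hm⟩, h2, h3⟩
        exact ⟨⟨m - k, by rw [mul_sub]; omega⟩, h2, h3⟩
    have hstep := ncard_prog_step hD h' hAM' hlt.le
    rw [hsame M, hsame M'] at hstep
    have hk0 : k ≤ 0 := int_nonpos_of_mul hDpos (by omega)
    have hdiv : (M - M')/D = -k := by
      rw [show M - M' = (D:ℤ) * (-k) by rw [mul_neg]; omega]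
      exact Int.mul_ediv_cancel_left _ (by omega)
    have hdiv' : (M' - M)/D = k := by
      rw [hk]; exact Int.mul_ediv_cancel_left _ (by omega)
    rw [hdiv] at hstep
    rw [hdiv']
    omega

end
end StmtAux
namespace StmtAux
open Set SeqPartition
noncomputable section

lemma ncard_biUnion_range (N : ℕ) (P : ℕ → Set ℤ) (hfin : ∀ i, (P i).Finite)
    (hdisj : ∀ i j, i < N → j < N → i ≠ j → Disjoint (P i) (P j)) :
    (⋃ i ∈ Finset.range N, P i).ncard = ∑ i ∈ Finset.range N, (P i).ncard := by
  induction N with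
  | zero => simp
  | succ n ih =>
    rw [Finset.range_add_one, Finset.set_biUnion_insert, Finset.sum_insert (by simp)]
    rw [Set.ncard_union_eq ?_ (hfin n) ?_,
      ih (fun i j hi hj hij => hdisj i j (by omega) (by omega) hij)]
    · apply Set.disjoint_iUnion_right.mpr
      intro i
      apply Set.disjoint_iUnion_right.mpr
      intro hi
      simp only [Finset.mem_range] at hi
      exact hdisj n i (by omega) (by omega) (by omega)
    · apply Set.Finite.biUnion (Finset.finite_toSet _)
      intro i _
      exact hfin i

/-- the column-sum identity for flush partitions with equal `t`-charges -/
lemma col_sum {s t : ℕ} (hs : 0 < s) (ht : 0 < t) {l τ : SeqPartition}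
    (Ml Mτ : ℤ → ℤ)
    (hMl : ∀ c : ℤ, Ml c ∈ l.betaSet ∧ ((s*t : ℕ):ℤ) ∣ (Ml c - c) ∧
      ∀ y ∈ l.betaSet, ((s*t : ℕ):ℤ) ∣ (y - c) → y ≤ Ml c)
    (hMτ : ∀ c : ℤ, Mτ c ∈ τ.betaSet ∧ ((s*t : ℕ):ℤ) ∣ (Mτ c - c) ∧
      ∀ y ∈ τ.betaSet, ((s*t : ℕ):ℤ) ∣ (y - c) → y ≤ Mτ c)
    (hfl : ∀ b ∈ l.betaSet, b - ((s*t : ℕ):ℤ) ∈ l.betaSet)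
    (hfτ : ∀ b ∈ τ.betaSet, b - ((s*t : ℕ):ℤ) ∈ τ.betaSet)
    (hchg : ChargeEq t l τ) (c : ℤ) :
    ∑ i ∈ Finset.range s, Ml (c + t*i) = ∑ i ∈ Finset.range s, Mτ (c + t*i) := by
  have hD : 0 < s * t := Nat.mul_pos hs ht
  have hDpos : (0:ℤ) < ((s*t : ℕ):ℤ) := by exact_mod_cast hD
  obtain ⟨K₀, hK₀⟩ := hchg c
  set K : ℕ := K₀ + (Finset.range s).sup
    (fun i : ℕ => (-(Ml (c + (t:ℤ)*(i:ℤ)))).toNat + (-(Mτ (c + (t:ℤ)*(i:ℤ)))).toNat) with hKdef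
  have hKM : ∀ i ∈ Finset.range s, -(K:ℤ) ≤ Ml (c + t*i) ∧ -(K:ℤ) ≤ Mτ (c + t*i) := by
    intro i hi
    have h1 : (-(Ml (c + (t:ℤ)*(i:ℤ)))).toNat + (-(Mτ (c + (t:ℤ)*(i:ℤ)))).toNat
        ≤ (Finset.range s).sup
          (fun i : ℕ => (-(Ml (c + (t:ℤ)*(i:ℤ)))).toNat + (-(Mτ (c + (t:ℤ)*(i:ℤ)))).toNat) :=
      Finset.le_sup (s := Finset.range s)
        (f := fun i : ℕ => (-(Ml (c + (t:ℤ)*(i:ℤ)))).toNat + (-(Mτ (c + (t:ℤ)*(i:ℤ)))).toNat) hi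
    have h2 : (-(Ml (c + (t:ℤ)*(i:ℤ)))).toNat + (-(Mτ (c + (t:ℤ)*(i:ℤ)))).toNat ≤ K := by omega
    constructor
    · have h5 := Int.self_le_toNat (-(Ml (c + (t:ℤ)*(i:ℤ))))
      omega
    · have h5 := Int.self_le_toNat (-(Mτ (c + (t:ℤ)*(i:ℤ))))
      omega
  have hcnt := hK₀ K (by omega)
  -- decomposition of the count into s classes
  have hdecomp : ∀ (ρ : SeqPartition) (M : ℤ → ℤ),
      (∀ c' : ℤ, M c' ∈ ρ.betaSet ∧ ((s*t : ℕ):ℤ) ∣ (M c' - c') ∧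
        ∀ y ∈ ρ.betaSet, ((s*t : ℕ):ℤ) ∣ (y - c') → y ≤ M c') →
      (∀ b ∈ ρ.betaSet, b - ((s*t : ℕ):ℤ) ∈ ρ.betaSet) →
      ρ.betaSet ∩ {x | (t:ℤ) ∣ (x - c) ∧ -(K:ℤ) ≤ x}
        = ⋃ i ∈ Finset.range s,
            {x : ℤ | ((s*t : ℕ):ℤ) ∣ (x - M (c + t*i)) ∧ -(K:ℤ) ≤ x ∧ x ≤ M (c + t*i)} := by
    intro ρ M hM hfρ
    ext x
    simp only [Set.mem_inter_iff, Set.mem_setOf_eq, Set.mem_iUnion, Finset.mem_range]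
    constructor
    · rintro ⟨hxβ, ⟨m, hm⟩, hxK⟩
      set i : ℕ := (m % (s:ℤ)).toNat with hidef
      have hspos : (0:ℤ) < (s:ℤ) := by exact_mod_cast hs
      have hmod1 : 0 ≤ m % (s:ℤ) := Int.emod_nonneg m (by omega)
      have hmod2 : m % (s:ℤ) < s := Int.emod_lt_of_pos m hspos
      have hic : ((i:ℕ):ℤ) = m % (s:ℤ) := Int.toNat_of_nonneg hmod1
      have hilt : i < s := by omega
      have hdvd1 : ((s*t : ℕ):ℤ) ∣ (x - (c + t*i)) := by
        have h5 : (s:ℤ) ∣ (m - i) := by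
          rw [hic]
          exact Int.dvd_self_sub_of_emod_eq rfl
        obtain ⟨w, hw⟩ := h5
        refine ⟨w, ?_⟩
        push_cast
        push_cast at hm
        nlinarith [hw]
      have hdvd2 : ((s*t : ℕ):ℤ) ∣ (x - M (c + t*i)) := by
        obtain ⟨w1, hw1⟩ := hdvd1
        obtain ⟨w2, hw2⟩ := (hM (c + t*i)).2.1
        exact ⟨w1 - w2, by rw [mul_sub]; omega⟩
      refine ⟨i, hilt, hdvd2, hxK, (hM (c + t*i)).2.2 x hxβ hdvd1⟩
    · rintro ⟨i, hilt, hdvd, hxK, hxle⟩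
      have hMc := hM (c + t*i)
      refine ⟨closed_descend hfρ hMc.1 ?_ hxle, ?_, hxK⟩
      · obtain ⟨w, hw⟩ := hdvd
        exact ⟨-w, by rw [mul_neg]; omega⟩
      · obtain ⟨w1, hw1⟩ := hdvd
        obtain ⟨w2, hw2⟩ := hMc.2.1
        refine ⟨(s:ℤ)*(w1 + w2) + i, ?_⟩
        have : x - c = (x - M (c+t*i)) + (M (c+t*i) - (c + t*i)) + t*i := by ring
        rw [this, hw1, hw2]
        push_cast
        ring
  -- disjointness
  have hdisjoint : ∀ (M : ℤ → ℤ),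
      (∀ c' : ℤ, ((s*t : ℕ):ℤ) ∣ (M c' - c')) →
      ∀ i j : ℕ, i < s → j < s → i ≠ j →
      Disjoint {x : ℤ | ((s*t : ℕ):ℤ) ∣ (x - M (c + t*i)) ∧ -(K:ℤ) ≤ x ∧ x ≤ M (c + t*i)}
        {x : ℤ | ((s*t : ℕ):ℤ) ∣ (x - M (c + t*j)) ∧ -(K:ℤ) ≤ x ∧ x ≤ M (c + t*j)} := by
    intro M hM i j hi hj hij
    rw [Set.disjoint_left]
    rintro x ⟨h1, _, _⟩ ⟨h2, _, _⟩
    obtain ⟨w1, hw1⟩ := h1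
    obtain ⟨w2, hw2⟩ := h2
    obtain ⟨u1, hu1⟩ := hM (c + t*i)
    obtain ⟨u2, hu2⟩ := hM (c + t*j)
    -- t*(i - j) = (s*t) * w  for some w
    have hkey : (t:ℤ) * ((i:ℤ) - j) = ((s*t:ℕ):ℤ) * (w2 + u2 - w1 - u1) := by
      have : (t:ℤ)*((i:ℤ)-j) = (x - M (c+t*j)) + (M (c+t*j) - (c+t*j))
          - (x - M (c+t*i)) - (M (c+t*i) - (c+t*i)) := by push_cast; ring
      rw [this, hw1, hw2, hu1, hu2]; ring
    have htpos : (0:ℤ) < (t:ℤ) := by exact_mod_cast ht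
    have hcast : ((s*t:ℕ):ℤ) = (s:ℤ)*(t:ℤ) := by push_cast; ring
    rw [hcast] at hkey
    have hfact : (t:ℤ) * ((i:ℤ) - j) = (t:ℤ) * ((s:ℤ) * (w2 + u2 - w1 - u1)) := by
      rw [hkey]; ring
    have heq := mul_left_cancel₀ (by omega : (t:ℤ) ≠ 0) hfact
    have hdvds : (s:ℤ) ∣ ((i:ℤ) - j) := ⟨_, heq⟩
    have habs : |(i:ℤ) - j| < (s:ℤ) := by
      rw [abs_lt]
      exact ⟨by omega, by omega⟩
    have := Int.eq_zero_of_abs_lt_dvd hdvds habs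
    omega
  -- apply the decomposition to both partitions
  have hl := hdecomp l Ml hMl hfl
  have hτ' := hdecomp τ Mτ hMτ hfτ
  unfold cnt at hcnt
  rw [hl, hτ'] at hcnt
  have hfinP : ∀ (M : ℤ → ℤ) (i : ℕ),
      ({x : ℤ | ((s*t : ℕ):ℤ) ∣ (x - M (c + t*i)) ∧ -(K:ℤ) ≤ x ∧ x ≤ M (c + t*i)}).Finite :=
    fun M i => prog_finite _ _ _ _
  rw [ncard_biUnion_range s _ (hfinP Ml)
        (fun i j hi hj hij => hdisjoint Ml (fun c' => (hMl c').2.1) i j hi hj hij),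
      ncard_biUnion_range s _ (hfinP Mτ)
        (fun i j hi hj hij => hdisjoint Mτ (fun c' => (hMτ c').2.1) i j hi hj hij)] at hcnt
  -- per-class signed comparison
  have hz : ∀ i ∈ Finset.range s, ∃ z : ℤ,
      Ml (c + t*i) - Mτ (c + t*i) = ((s*t:ℕ):ℤ) * z ∧
      (({x : ℤ | ((s*t : ℕ):ℤ) ∣ (x - Ml (c + t*i)) ∧ -(K:ℤ) ≤ x ∧ x ≤ Ml (c + t*i)}).ncard : ℤ)
        - ({x : ℤ | ((s*t : ℕ):ℤ) ∣ (x - Mτ (c + t*i)) ∧ -(K:ℤ) ≤ x ∧ x ≤ Mτ (c + t*i)}).ncard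
        = z := by
    intro i hi
    have hKMi := hKM i hi
    have hdvdMM : ((s*t:ℕ):ℤ) ∣ (Ml (c + t*i) - Mτ (c + t*i)) := by
      obtain ⟨w1, hw1⟩ := (hMl (c + t*i)).2.1
      obtain ⟨w2, hw2⟩ := (hMτ (c + t*i)).2.1
      exact ⟨w1 - w2, by rw [mul_sub]; omega⟩
    obtain ⟨z, hzdef⟩ := hdvdMM
    refine ⟨z, hzdef, ?_⟩
    have hrw : {x : ℤ | ((s*t : ℕ):ℤ) ∣ (x - Ml (c + t*i)) ∧ -(K:ℤ) ≤ x ∧ x ≤ Ml (c + t*i)}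
        = {x : ℤ | ((s*t : ℕ):ℤ) ∣ (x - Mτ (c + t*i)) ∧ -(K:ℤ) ≤ x ∧ x ≤ Ml (c + t*i)} := by
      ext x
      simp only [Set.mem_setOf_eq]
      constructor
      · rintro ⟨⟨w, hw⟩, h2, h3⟩
        exact ⟨⟨w + z, by rw [mul_add]; omega⟩, h2, h3⟩
      · rintro ⟨⟨w, hw⟩, h2, h3⟩
        exact ⟨⟨w - z, by rw [mul_sub]; omega⟩, h2, h3⟩
    rw [hrw]
    have hdiff := ncard_prog_diff hD (A := -(K:ℤ)) (M := Mτ (c + t*i)) (M' := Ml (c + t*i))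
      ⟨z, hzdef⟩ hKMi.2 hKMi.1
    rw [hdiff]
    rw [hzdef]
    exact Int.mul_ediv_cancel_left _ (by omega)
  choose z hz1 hz2 using hz
  -- sum the signed comparisons
  have hcast : (∑ i ∈ Finset.range s,
      (({x : ℤ | ((s*t : ℕ):ℤ) ∣ (x - Ml (c + t*i)) ∧ -(K:ℤ) ≤ x ∧ x ≤ Ml (c + t*i)}).ncard : ℤ))
      = ∑ i ∈ Finset.range s,
      (({x : ℤ | ((s*t : ℕ):ℤ) ∣ (x - Mτ (c + t*i)) ∧ -(K:ℤ) ≤ x ∧ x ≤ Mτ (c + t*i)}).ncard : ℤ) := by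
    exact_mod_cast hcnt
  have hzero : ∑ i ∈ Finset.range s, ((Ml (c + t*i) - Mτ (c + t*i))) = 0 := by
    have h1 : ∑ i ∈ Finset.range s, ((Ml (c + t*i) - Mτ (c + t*i)))
        = ∑ x ∈ (Finset.range s).attach, (((s*t:ℕ):ℤ) * z x.1 x.2) := by
      rw [← Finset.sum_attach (Finset.range s) (fun i => Ml (c + t*i) - Mτ (c + t*i))]
      exact Finset.sum_congr rfl (fun x _ => hz1 x.1 x.2)
    have h2 : ∑ x ∈ (Finset.range s).attach, (z x.1 x.2) = 0 := by
      have h3 : ∑ x ∈ (Finset.range s).attach, (z x.1 x.2)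
          = ∑ x ∈ (Finset.range s).attach,
            ((({x' : ℤ | ((s*t : ℕ):ℤ) ∣ (x' - Ml (c + t*x.1)) ∧ -(K:ℤ) ≤ x' ∧ x' ≤ Ml (c + t*x.1)}).ncard : ℤ)
            - ({x' : ℤ | ((s*t : ℕ):ℤ) ∣ (x' - Mτ (c + t*x.1)) ∧ -(K:ℤ) ≤ x' ∧ x' ≤ Mτ (c + t*x.1)}).ncard) :=
        Finset.sum_congr rfl (fun x _ => (hz2 x.1 x.2).symm)
      rw [h3, Finset.sum_sub_distrib]
      rw [Finset.sum_attach (Finset.range s)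
        (fun i => (({x' : ℤ | ((s*t : ℕ):ℤ) ∣ (x' - Ml (c + t*i)) ∧ -(K:ℤ) ≤ x' ∧ x' ≤ Ml (c + t*i)}).ncard : ℤ)),
        Finset.sum_attach (Finset.range s)
        (fun i => (({x' : ℤ | ((s*t : ℕ):ℤ) ∣ (x' - Mτ (c + t*i)) ∧ -(K:ℤ) ≤ x' ∧ x' ≤ Mτ (c + t*i)}).ncard : ℤ))]
      omega
    rw [h1, ← Finset.mul_sum, h2, mul_zero]
  have := Finset.sum_sub_distrib (s := Finset.range s)
    (f := fun i => Ml (c + t*i)) (g := fun i => Mτ (c + t*i))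
  omega

end
end StmtAux
namespace StmtAux
open Set SeqPartition
noncomputable section

/-- raising beads: increase size by D*k preserving charges mod divisors of D -/
lemma raise (D : ℕ) (hD : 0 < D) (l : SeqPartition) (k : ℕ) :
    ∃ m : SeqPartition, (m.size : ℤ) = l.size + (D:ℤ) * k ∧
      (∀ e : ℕ, (e:ℤ) ∣ (D:ℤ) → ChargeEq e l m) ∧
      (0 < k → ∃ y ∈ m.betaSet, y - (D:ℤ) ∉ m.betaSet) := by
  induction k with
  | zero => exact ⟨l, by simp, fun e _ => chargeEq_refl _ _, by omega⟩
  | succ k ih =>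
    obtain ⟨m, hsz, hchg, _⟩ := ih
    obtain ⟨M, hM, _, hMmax⟩ := exists_max_class m (show 0 < 1 by omega) 0
    have hMtop : ∀ y ∈ m.betaSet, y ≤ M := fun y hy => hMmax y hy (one_dvd _)
    have hb : M + (D:ℤ) ∉ m.betaSet := by
      intro hmem
      have := hMtop _ hmem
      have : (0:ℤ) < D := by exact_mod_cast hD
      omega
    obtain ⟨m', hm', hsz'⟩ := move1 m hM hb
    have hmul : (D:ℤ) * ((k:ℤ)+1) = (D:ℤ)*(k:ℤ) + D := by ring
    refine ⟨m', by push_cast; push_cast at hsz; omega, ?_, ?_⟩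
    · intro e he
      refine chargeEq_trans (hchg e he) (moveChargeEq hM hb hm' ?_)
      have : M + (D:ℤ) - M = (D:ℤ) := by ring
      rw [this]
      exact he
    · intro _
      refine ⟨M + D, by rw [hm']; exact Set.mem_insert _ _, ?_⟩
      rw [hm']
      intro hmem
      rcases Set.mem_insert_iff.mp hmem with heq | hmem2
      · have : (0:ℤ) < D := by exact_mod_cast hD
        omega
      · have : M + (D:ℤ) - D = M := by ring
        rw [this] at hmem2
        exact hmem2.2 rfl

lemma insert_swap {A : Set ℤ} {b₁ b₂ a₂ : ℤ} (h1 : b₁ ≠ a₂) (h2 : b₂ ≠ a₂) :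
    insert b₂ ((insert b₁ A) \ {a₂}) = insert b₁ ((insert b₂ A) \ {a₂}) := by
  ext y
  simp only [Set.mem_insert_iff, Set.mem_diff, Set.mem_singleton_iff]
  constructor
  · rintro (rfl | ⟨(rfl | hy), hne⟩)
    · exact Or.inr ⟨Or.inl rfl, h2⟩
    · exact Or.inl rfl
    · exact Or.inr ⟨Or.inr hy, hne⟩
  · rintro (rfl | ⟨(rfl | hy), hne⟩)
    · exact Or.inr ⟨Or.inl rfl, h1⟩
    · exact Or.inl rfl
    · exact Or.inr ⟨Or.inr hy, hne⟩

lemma ne_of_classes {D : ℕ} {u v cu cv : ℤ} (hu : (D:ℤ) ∣ (u - cu)) (hv : (D:ℤ) ∣ (v - cv))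
    (hne : ¬ (D:ℤ) ∣ (cu - cv)) : u ≠ v := by
  rintro rfl
  apply hne
  obtain ⟨w1, h1⟩ := hu
  obtain ⟨w2, h2⟩ := hv
  exact ⟨w2 - w1, by rw [mul_sub]; omega⟩

/-- KEY STEP: if `l` is the unique partition with its size and charges, and `l` is
`st`-flush, then `β(l)` is closed under subtracting `s`. -/
lemma closed_step {s t : ℕ} (hs : 0 < s) (ht : 0 < t) (hnd : ¬ (t:ℤ) ∣ (s:ℤ))
    {l τ : SeqPartition}
    (hfl : ∀ b ∈ l.betaSet, b - ((s*t:ℕ):ℤ) ∈ l.betaSet)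
    (hfτ : ∀ b ∈ τ.betaSet, b - ((s*t:ℕ):ℤ) ∈ τ.betaSet)
    (hτs : ∀ b ∈ τ.betaSet, b - (s:ℤ) ∈ τ.betaSet)
    (hchg : ChargeEq t l τ)
    (huniq : ∀ m : SeqPartition, m.size = l.size → ChargeEq s l m → ChargeEq t l m → m = l) :
    ∀ x ∈ l.betaSet, x - (s:ℤ) ∈ l.betaSet := by
  have ht2 : 1 < t := by
    rcases Nat.lt_or_ge 1 t with h | h
    · exact h
    · exfalso
      have h1 : t = 1 := by omega
      subst h1
      exact hnd (by norm_num)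
  have hD : 0 < s * t := Nat.mul_pos hs ht
  have hDz : (0:ℤ) < ((s*t:ℕ):ℤ) := by exact_mod_cast hD
  have hcast : ((s*t:ℕ):ℤ) = (s:ℤ) * t := by push_cast; ring
  have hslt : (s:ℤ) < ((s*t:ℕ):ℤ) := by
    rw [hcast]
    have h1 : (0:ℤ) < s := by exact_mod_cast hs
    have h2 : (2:ℤ) ≤ t := by exact_mod_cast ht2
    nlinarith
  by_contra hcon
  push_neg at hcon
  obtain ⟨x, hx, hxs⟩ := hcon
  choose Ml hMl using fun c => exists_max_class l hD c
  choose Mτ hMτ using fun c => exists_max_class τ hD c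
  set q : ℤ := x with hq
  -- membership characterization for l
  have hmem : ∀ (x' c' : ℤ), ((s*t:ℕ):ℤ) ∣ (x' - c') → (x' ∈ l.betaSet ↔ x' ≤ Ml c') := by
    intro x' c' hdvd
    constructor
    · intro h
      exact (hMl c').2.2 x' h hdvd
    · intro h
      refine closed_descend hfl (hMl c').1 ?_ h
      obtain ⟨w1, h1⟩ := hdvd
      obtain ⟨w2, h2⟩ := (hMl c').2.1
      exact ⟨w2 - w1, by rw [mul_sub]; omega⟩
  -- the bad difference is at least s + st
  have hDq : Ml q - Ml (q - s) ≥ (s:ℤ) + ((s*t:ℕ):ℤ) := by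
    have h1 : x ≤ Ml q := (hMl q).2.2 x hx ⟨0, by rw [hq]; ring⟩
    have h2 : ¬ (x - s ≤ Ml (q - s)) := by
      intro hle
      exact hxs ((hmem (x - s) (q - s) ⟨0, by rw [hq]; ring⟩).mpr hle)
    push_neg at h2
    have h3 : Ml q - Ml (q - s) > (s:ℤ) := by omega
    have h4 : ((s*t:ℕ):ℤ) ∣ (Ml q - Ml (q - s) - s) := by
      obtain ⟨w1, hw1⟩ := (hMl q).2.1
      obtain ⟨w2, hw2⟩ := (hMl (q - s)).2.1
      exact ⟨w1 - w2, by rw [mul_sub]; omega⟩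
    obtain ⟨w, hw⟩ := h4
    have hwpos : 0 < w := by
      by_contra hn
      push_neg at hn
      have := mul_nonpos_of_nonneg_of_nonpos hDz.le hn
      omega
    have : ((s*t:ℕ):ℤ) ≤ ((s*t:ℕ):ℤ) * w := le_mul_of_one_le_right hDz.le (by omega)
    omega
  -- the τ bound
  have hDτ : ∀ y : ℤ, Mτ y - Mτ (y - s) ≤ (s:ℤ) := by
    intro y
    have h1 : Mτ y - s ∈ τ.betaSet := hτs _ (hMτ y).1
    have h2 : ((s*t:ℕ):ℤ) ∣ (Mτ y - s - (y - s)) := by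
      obtain ⟨w, hw⟩ := (hMτ y).2.1
      exact ⟨w, by omega⟩
    have := (hMτ (y - s)).2.2 _ h1 h2
    omega
  -- column sums
  have hcol : ∀ c : ℤ, ∑ i ∈ Finset.range s, Ml (c + t*i) = ∑ i ∈ Finset.range s, Mτ (c + t*i) :=
    fun c => col_sum hs ht Ml Mτ hMl hMτ hfl hfτ hchg c
  -- find the compensating class
  have hfind : ∃ i' ∈ Finset.range s, i' ≠ 0 ∧
      Ml (q + t*i') - Ml (q - s + t*i') ≤ (s:ℤ) - ((s*t:ℕ):ℤ) := by
    by_contra hno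
    push_neg at hno
    have hdvd_term : ∀ i : ℕ, ((s*t:ℕ):ℤ) ∣ (Ml (q + t*i) - Ml (q - s + t*i) - s) := by
      intro i
      obtain ⟨w1, hw1⟩ := (hMl (q + t*i)).2.1
      obtain ⟨w2, hw2⟩ := (hMl (q - s + t*i)).2.1
      exact ⟨w1 - w2, by rw [mul_sub]; omega⟩
    have hterm_ge : ∀ i ∈ Finset.range s, i ≠ 0 →
        (s:ℤ) ≤ Ml (q + t*i) - Ml (q - s + t*i) := by
      intro i hi hi0
      have h1 := hno i hi hi0
      obtain ⟨w, hw⟩ := hdvd_term i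
      have : 0 ≤ w := by
        by_contra hn
        push_neg at hn
        have h2 : w ≤ -1 := by omega
        have h3 : ((s*t:ℕ):ℤ) * w ≤ ((s*t:ℕ):ℤ) * (-1) :=
          mul_le_mul_of_nonneg_left h2 hDz.le
        omega
      have := mul_nonneg hDz.le this
      omega
    -- sum of differences over the row
    have hsum : ∑ i ∈ Finset.range s, (Ml (q + t*i) - Ml (q - s + t*i))
        = ∑ i ∈ Finset.range s, (Mτ (q + t*i) - Mτ (q - s + t*i)) := by
      rw [Finset.sum_sub_distrib, Finset.sum_sub_distrib, hcol q, hcol (q - s)]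
    have hub : ∑ i ∈ Finset.range s, (Mτ (q + t*i) - Mτ (q - s + t*i)) ≤ (s:ℤ) * s := by
      calc ∑ i ∈ Finset.range s, (Mτ (q + t*i) - Mτ (q - s + t*i))
          ≤ ∑ _i ∈ Finset.range s, (s:ℤ) := by
            apply Finset.sum_le_sum
            intro i _
            have := hDτ (q + t*i)
            have harg : q + t*i - s = q - s + t*i := by ring
            rw [harg] at this
            exact this
        _ = (s:ℤ) * s := by
            rw [Finset.sum_const, Finset.card_range, nsmul_eq_mul]
    have hlb : (s:ℤ) + ((s*t:ℕ):ℤ) + ((s:ℤ) - 1) * s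
        ≤ ∑ i ∈ Finset.range s, (Ml (q + t*i) - Ml (q - s + t*i)) := by
      have h0 : (0:ℕ) ∈ Finset.range s := Finset.mem_range.mpr hs
      rw [← Finset.sum_erase_add _ _ h0]
      have hterm0 : Ml (q + t*(0:ℕ)) - Ml (q - s + t*(0:ℕ)) ≥ (s:ℤ) + ((s*t:ℕ):ℤ) := by
        have h1 : q + (t:ℤ)*((0:ℕ):ℤ) = q := by push_cast; ring
        have h2 : q - s + (t:ℤ)*((0:ℕ):ℤ) = q - s := by push_cast; ring
        rw [h1, h2]
        exact hDq
      have herase : ((s:ℤ) - 1) * s ≤ ∑ i ∈ (Finset.range s).erase 0,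
          (Ml (q + t*i) - Ml (q - s + t*i)) := by
        have hcard : ((Finset.range s).erase 0).card = s - 1 := by
          rw [Finset.card_erase_of_mem h0, Finset.card_range]
        have := Finset.card_nsmul_le_sum ((Finset.range s).erase 0)
          (fun i => Ml (q + t*i) - Ml (q - s + t*i)) (s:ℤ) ?_
        · rw [hcard] at this
          have hcast2 : ((s - 1 : ℕ) : ℤ) = (s:ℤ) - 1 := by
            push_cast [Nat.cast_sub hs]; ring
          rw [nsmul_eq_mul, hcast2] at this
          exact this
        · intro i hi
          exact hterm_ge i (Finset.mem_of_mem_erase hi) (Finset.ne_of_mem_erase hi)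
      omega
    rw [hsum] at hlb
    have hspos : (0:ℤ) < s := by exact_mod_cast hs
    nlinarith [hlb, hub, hDz]
  obtain ⟨i', hi'mem, hi'0, hi'⟩ := hfind
  have hi's : i' < s := Finset.mem_range.mp hi'mem
  have hi'z : (0:ℤ) < (i':ℤ) ∧ (i':ℤ) < (s:ℤ) := by
    constructor <;> exact_mod_cast (by omega : _)
  -- the four classes and beads
  set C1 : ℤ := q with hC1
  set C2 : ℤ := q - s with hC2
  set C3 : ℤ := q - s + t*i' with hC3
  set C4 : ℤ := q + t*i' with hC4
  set a₁ : ℤ := Ml C1 with ha₁def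
  set b₁ : ℤ := Ml C2 + ((s*t:ℕ):ℤ) with hb₁def
  set a₂ : ℤ := Ml C3 with ha₂def
  set b₂ : ℤ := Ml C4 + ((s*t:ℕ):ℤ) with hb₂def
  obtain ⟨u2, hu2⟩ := (hMl C1).2.1
  obtain ⟨u1, hu1⟩ := (hMl C2).2.1
  obtain ⟨u4, hu4⟩ := (hMl C3).2.1
  obtain ⟨u3, hu3⟩ := (hMl C4).2.1
  -- non-divisibility facts
  have htdvdst : (t:ℤ) ∣ ((s*t:ℕ):ℤ) := ⟨s, by push_cast; ring⟩
  have nds : ¬ ((s*t:ℕ):ℤ) ∣ (s:ℤ) := by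
    intro h
    have h1 := Int.le_of_dvd (by exact_mod_cast hs) h
    omega
  have ndt : ¬ ((s*t:ℕ):ℤ) ∣ ((t:ℤ)*(i':ℤ)) := by
    rintro ⟨w, hw⟩
    rw [hcast] at hw
    have h1 : (t:ℤ) * (i':ℤ) = (t:ℤ) * ((s:ℤ)*w) := by rw [hw]; ring
    have h2 := mul_left_cancel₀ (show (t:ℤ) ≠ 0 by omega) h1
    have hw1 : 0 < w := by
      by_contra hn
      push_neg at hn
      have := mul_nonpos_of_nonneg_of_nonpos (show (0:ℤ) ≤ s by omega) hn
      omega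
    have : (s:ℤ) ≤ (s:ℤ)*w := le_mul_of_one_le_right (by omega) (by omega)
    omega
  have ndst1 : ¬ ((s*t:ℕ):ℤ) ∣ ((s:ℤ) - t*i') := by
    intro h
    apply hnd
    have h1 : (t:ℤ) ∣ ((s:ℤ) - t*i') := dvd_trans htdvdst h
    obtain ⟨w, hw⟩ := h1
    exact ⟨w + i', by rw [mul_add]; omega⟩
  have ndst2 : ¬ ((s*t:ℕ):ℤ) ∣ ((s:ℤ) + t*i') := by
    intro h
    apply hnd
    have h1 : (t:ℤ) ∣ ((s:ℤ) + t*i') := dvd_trans htdvdst h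
    obtain ⟨w, hw⟩ := h1
    exact ⟨w - i', by rw [mul_sub]; omega⟩
  have ndneg : ∀ z : ℤ, ¬ ((s*t:ℕ):ℤ) ∣ z → ¬ ((s*t:ℕ):ℤ) ∣ (-z) := by
    rintro z hz ⟨w, hw⟩
    exact hz ⟨-w, by rw [mul_neg]; omega⟩
  -- memberships
  have ha₁ : a₁ ∈ l.betaSet := (hMl C1).1
  have ha₂ : a₂ ∈ l.betaSet := (hMl C3).1
  have hb₁dvd : ((s*t:ℕ):ℤ) ∣ (b₁ - C2) := ⟨u1 + 1, by rw [mul_add]; omega⟩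
  have hb₂dvd : ((s*t:ℕ):ℤ) ∣ (b₂ - C4) := ⟨u3 + 1, by rw [mul_add]; omega⟩
  have hb₁ : b₁ ∉ l.betaSet := by
    intro h
    have := (hmem b₁ C2 hb₁dvd).mp h
    omega
  have hb₂ : b₂ ∉ l.betaSet := by
    intro h
    have := (hmem b₂ C4 hb₂dvd).mp h
    omega
  -- disequalities
  have d_a2a1 : a₂ ≠ a₁ := ne_of_classes ⟨u4, hu4⟩ ⟨u2, hu2⟩
    (by rw [show C3 - C1 = -((s:ℤ) - t*i') by rw [hC3, hC1]; ring]; exact ndneg _ ndst1)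
  have d_b2b1 : b₂ ≠ b₁ := ne_of_classes hb₂dvd hb₁dvd
    (by rw [show C4 - C2 = (s:ℤ) + t*i' by rw [hC4, hC2]; ring]; exact ndst2)
  have d_a1b2 : a₁ ≠ b₂ := ne_of_classes ⟨u2, hu2⟩ hb₂dvd
    (by rw [show C1 - C4 = -((t:ℤ)*i') by rw [hC1, hC4]; ring]; exact ndneg _ ndt)
  have d_a1b1 : a₁ ≠ b₁ := ne_of_classes ⟨u2, hu2⟩ hb₁dvd
    (by rw [show C1 - C2 = (s:ℤ) by rw [hC1, hC2]; ring]; exact nds)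
  have d_b1a2 : b₁ ≠ a₂ := fun h => hb₁ (by rw [h]; exact ha₂)
  have d_b2a2 : b₂ ≠ a₂ := fun h => hb₂ (by rw [h]; exact ha₂)
  -- the moves
  obtain ⟨m₁, hm₁, hsz₁⟩ := move1 l ha₁ hb₁
  have ha₂m₁ : a₂ ∈ m₁.betaSet := by
    rw [hm₁]
    exact Set.mem_insert_iff.mpr (Or.inr ⟨ha₂, fun h => d_a2a1 (Set.mem_singleton_iff.mp h)⟩)
  have hb₂m₁ : b₂ ∉ m₁.betaSet := by
    rw [hm₁]
    intro h
    rcases Set.mem_insert_iff.mp h with heq | hmem2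
    · exact d_b2b1 heq
    · exact hb₂ hmem2.1
  obtain ⟨m₂, hm₂, hsz₂⟩ := move1 m₁ ha₂m₁ hb₂m₁
  -- charge equalities mod s
  have hdvds1 : (s:ℤ) ∣ (b₁ - a₁) := by
    refine ⟨t*u1 - t*u2 + t - 1, ?_⟩
    have h1 : b₁ - a₁ = ((s*t:ℕ):ℤ)*u1 - ((s*t:ℕ):ℤ)*u2 + ((s*t:ℕ):ℤ) - s := by
      rw [hb₁def, ha₁def]
      omega
    rw [h1, hcast]
    ring
  have hdvds2 : (s:ℤ) ∣ (b₂ - a₂) := by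
    refine ⟨t*u3 - t*u4 + t + 1, ?_⟩
    have h1 : b₂ - a₂ = ((s*t:ℕ):ℤ)*u3 - ((s*t:ℕ):ℤ)*u4 + ((s*t:ℕ):ℤ) + s := by
      rw [hb₂def, ha₂def]
      omega
    rw [h1, hcast]
    ring
  have hchgs : ChargeEq s l m₂ :=
    chargeEq_trans (moveChargeEq ha₁ hb₁ hm₁ hdvds1) (moveChargeEq ha₂m₁ hb₂m₁ hm₂ hdvds2)
  -- charge equalities mod t, via the re-paired intermediate partition
  obtain ⟨m₁', hm₁', _⟩ := move1 l ha₁ hb₂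
  have hdvdt1 : (t:ℤ) ∣ (b₂ - a₁) := by
    refine ⟨s*u3 - s*u2 + s + i', ?_⟩
    have h1 : b₂ - a₁ = ((s*t:ℕ):ℤ)*u3 - ((s*t:ℕ):ℤ)*u2 + ((s*t:ℕ):ℤ) + t*i' := by
      rw [hb₂def, ha₁def]
      omega
    rw [h1, hcast]
    ring
  have hdvdt2 : (t:ℤ) ∣ (b₁ - a₂) := by
    refine ⟨s*u1 - s*u4 + s - i', ?_⟩
    have h1 : b₁ - a₂ = ((s*t:ℕ):ℤ)*u1 - ((s*t:ℕ):ℤ)*u4 + ((s*t:ℕ):ℤ) - t*i' := by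
      rw [hb₁def, ha₂def]
      omega
    rw [h1, hcast]
    ring
  have ha₂m₁' : a₂ ∈ m₁'.betaSet := by
    rw [hm₁']
    exact Set.mem_insert_iff.mpr (Or.inr ⟨ha₂, fun h => d_a2a1 (Set.mem_singleton_iff.mp h)⟩)
  have hb₁m₁' : b₁ ∉ m₁'.betaSet := by
    rw [hm₁']
    intro h
    rcases Set.mem_insert_iff.mp h with heq | hmem2
    · exact d_b2b1 heq.symm
    · exact hb₁ hmem2.1
  have hm₂' : m₂.betaSet = insert b₁ (m₁'.betaSet \ {a₂}) := by
    rw [hm₂, hm₁, hm₁']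
    exact insert_swap d_b1a2 d_b2a2
  have hchgt : ChargeEq t l m₂ :=
    chargeEq_trans (moveChargeEq ha₁ hb₂ hm₁' hdvdt1)
      (moveChargeEq ha₂m₁' hb₁m₁' hm₂' hdvdt2)
  -- size bookkeeping
  have hΔdvd : (b₁ - a₁) + (b₂ - a₂) = ((s*t:ℕ):ℤ) * (u1 - u2 + u3 - u4 + 2) := by
    have h1 : b₁ - a₁ = ((s*t:ℕ):ℤ)*u1 - ((s*t:ℕ):ℤ)*u2 + ((s*t:ℕ):ℤ) - s := by
      rw [hb₁def, ha₁def]; omega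
    have h2 : b₂ - a₂ = ((s*t:ℕ):ℤ)*u3 - ((s*t:ℕ):ℤ)*u4 + ((s*t:ℕ):ℤ) + s := by
      rw [hb₂def, ha₂def]; omega
    rw [h1, h2]
    ring
  have hΔle : (b₁ - a₁) + (b₂ - a₂) ≤ 0 := by
    have h1 : a₁ - (b₁ - ((s*t:ℕ):ℤ)) ≥ (s:ℤ) + ((s*t:ℕ):ℤ) := by
      rw [ha₁def, hb₁def]
      omega
    have h2 : (b₂ - ((s*t:ℕ):ℤ)) - a₂ ≤ (s:ℤ) - ((s*t:ℕ):ℤ) := by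
      rw [hb₂def, ha₂def]
      omega
    omega
  set w : ℤ := u1 - u2 + u3 - u4 + 2 with hwdef
  have hwle : w ≤ 0 := by
    by_contra hn
    push_neg at hn
    have : ((s*t:ℕ):ℤ) * 1 ≤ ((s*t:ℕ):ℤ) * w := mul_le_mul_of_nonneg_left (by omega) hDz.le
    omega
  have hsizem₂ : (m₂.size : ℤ) = l.size + ((s*t:ℕ):ℤ) * w := by
    rw [← hΔdvd]
    omega
  rcases eq_or_lt_of_le hwle with hw0 | hwneg
  · -- w = 0 : m₂ is a second partition of the same size
    have hsz : m₂.size = l.size := by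
      rw [hw0] at hsizem₂
      simp only [mul_zero, add_zero] at hsizem₂
      exact_mod_cast hsizem₂
    have heq := huniq m₂ hsz hchgs hchgt
    -- a₁ witnesses m₂ ≠ l
    have ha₁m₂ : a₁ ∉ m₂.betaSet := by
      rw [hm₂, hm₁]
      intro h
      rcases Set.mem_insert_iff.mp h with heq2 | h2
      · exact d_a1b2 heq2
      · rcases Set.mem_insert_iff.mp h2.1 with heq3 | h3
        · exact d_a1b1 heq3
        · exact h3.2 rfl
    rw [heq] at ha₁m₂
    exact ha₁m₂ ha₁
  · -- w < 0 : raise m₂ back up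
    set k : ℕ := (-w).toNat with hkdef
    have hk1 : 0 < k := by omega
    have hkz : ((k:ℕ):ℤ) = -w := by omega
    obtain ⟨m₃, hsz₃, hchg₃, hdrop⟩ := raise (s*t) hD m₂ k
    have hsz₃' : m₃.size = l.size := by
      have hmm : ((s*t:ℕ):ℤ) * ((k:ℕ):ℤ) = -(((s*t:ℕ):ℤ) * w) := by rw [hkz]; ring
      have : (m₃.size : ℤ) = (l.size : ℤ) := by omega
      exact_mod_cast this
    have hchg₃s : ChargeEq s l m₃ :=
      chargeEq_trans hchgs (hchg₃ s ⟨t, by push_cast; ring⟩)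
    have hchg₃t : ChargeEq t l m₃ :=
      chargeEq_trans hchgt (hchg₃ t ⟨s, by push_cast; ring⟩)
    have heq := huniq m₃ hsz₃' hchg₃s hchg₃t
    obtain ⟨y, hy, hynot⟩ := hdrop hk1
    rw [heq] at hy hynot
    exact hynot (hfl y hy)

end
end StmtAux

namespace StmtAux
open Set SeqPartition
noncomputable section

lemma not_dvd_coprime {s t : ℕ} (hst : Nat.Coprime s t) (ht : 1 < t) :
    ¬ (t:ℤ) ∣ (s:ℤ) := by
  intro h
  have h1 : t ∣ s := Int.ofNat_dvd.mp h
  have h2 : t ∣ Nat.gcd s t := Nat.dvd_gcd h1 (dvd_refl t)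
  rw [hst] at h2
  have := Nat.le_of_dvd (by omega) h2
  omega

/-- main uniqueness argument: the unique partition with its size and charges is flush -/
lemma unique_implies_flush {s t : ℕ} (hs : 1 < s) (ht : 1 < t) {l : SeqPartition}
    (huniq : ∀ m : SeqPartition, m.size = l.size → ChargeEq s l m → ChargeEq t l m → m = l) :
    ∀ b ∈ l.betaSet, b - ((s*t:ℕ):ℤ) ∈ l.betaSet := by
  have hD : 0 < s * t := by positivity
  have hD2 : 1 < s * t := by
    have : 2*2 ≤ s*t := Nat.mul_le_mul hs ht
    omega
  have hDz : (1:ℤ) < ((s*t:ℕ):ℤ) := by exact_mod_cast hD2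
  by_contra hcon
  push_neg at hcon
  obtain ⟨x, hx, hxnot⟩ := hcon
  obtain ⟨w, hw, hwdvd, hwmax⟩ := exists_max_class l hD (x+1)
  have hwnot : w + ((s*t:ℕ):ℤ) ∉ l.betaSet := by
    intro hmem
    have h1 : ((s*t:ℕ):ℤ) ∣ (w + ((s*t:ℕ):ℤ) - (x+1)) := by
      obtain ⟨u, hu⟩ := hwdvd
      exact ⟨u + 1, by rw [mul_add]; omega⟩
    have := hwmax _ hmem h1
    omega
  have ndvd1 : ¬ ((s*t:ℕ):ℤ) ∣ (w - x) := by
    intro h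
    obtain ⟨u1, hu1⟩ := h
    obtain ⟨u2, hu2⟩ := hwdvd
    have h1 : ((s*t:ℕ):ℤ) ∣ (1:ℤ) := ⟨u1 - u2, by rw [mul_sub]; omega⟩
    have := Int.le_of_dvd (by omega) h1
    omega
  have hwx : w ≠ x := by
    intro h
    exact ndvd1 ⟨0, by omega⟩
  -- move x down by st, w up by st
  obtain ⟨m₁, hm₁, hsz₁⟩ := move1 l hx hxnot
  have hwm₁ : w ∈ m₁.betaSet := by
    rw [hm₁]
    exact Set.mem_insert_iff.mpr (Or.inr ⟨hw, fun h => hwx (Set.mem_singleton_iff.mp h)⟩)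
  have hwstm₁ : w + ((s*t:ℕ):ℤ) ∉ m₁.betaSet := by
    rw [hm₁]
    intro h
    rcases Set.mem_insert_iff.mp h with heq | hmem2
    · exact ndvd1 ⟨-2, by rw [mul_neg]; omega⟩
    · exact hwnot hmem2.1
  obtain ⟨m₂, hm₂, hsz₂⟩ := move1 m₁ hwm₁ hwstm₁
  have hsz : m₂.size = l.size := by
    have : (m₂.size : ℤ) = (l.size : ℤ) := by omega
    exact_mod_cast this
  have hchgboth : ∀ e : ℕ, (e:ℤ) ∣ ((s*t:ℕ):ℤ) → ChargeEq e l m₂ := by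
    intro e he
    refine chargeEq_trans (moveChargeEq hx hxnot hm₁ ?_) (moveChargeEq hwm₁ hwstm₁ hm₂ ?_)
    · obtain ⟨u, hu⟩ := he
      exact ⟨-u, by rw [mul_neg]; omega⟩
    · obtain ⟨u, hu⟩ := he
      exact ⟨u, by omega⟩
  have heq := huniq m₂ hsz
    (hchgboth s ⟨t, by push_cast; ring⟩) (hchgboth t ⟨s, by push_cast; ring⟩)
  have hxm₂ : x ∉ m₂.betaSet := by
    rw [hm₂, hm₁]
    intro h
    rcases Set.mem_insert_iff.mp h with heq2 | h2
    · exact ndvd1 ⟨-1, by rw [mul_neg]; omega⟩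
    · rcases Set.mem_insert_iff.mp h2.1 with heq3 | h3
      · omega
      · exact h3.2 rfl
  rw [heq] at hxm₂
  exact hxm₂ hx

end
end StmtAux

open StmtAux SeqPartition in
theorem stmt15_aux (s t : ℕ) (hs : 1 < s) (ht : 1 < t) (hst : Nat.Coprime s t)
    (σ τ : SeqPartition)
    (hσs : SeqPartition.IsCore s σ) (hσt : SeqPartition.IsCore t σ)
    (hτs : SeqPartition.IsCore s τ) (hτt : SeqPartition.IsCore t τ)
    (n : ℕ) :
    {l : SeqPartition | l.size = n ∧ SeqPartition.HasCore s l σ ∧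
      SeqPartition.HasCore t l τ}.ncard = 1 ↔ (σ = τ ∧ n = σ.size) := by
  have hs0 : 0 < s := by omega
  have ht0 : 0 < t := by omega
  constructor
  · -- hard direction
    intro hone
    obtain ⟨l, hl⟩ := Set.ncard_eq_one.mp hone
    have hlmem : l ∈ {l : SeqPartition | l.size = n ∧ SeqPartition.HasCore s l σ ∧
        SeqPartition.HasCore t l τ} := by
      rw [hl]; exact Set.mem_singleton _
    obtain ⟨hsize, hcs, hct⟩ := hlmem
    have hchgsσ : ChargeEq s l σ := chain_chargeEq (dvd_refl _) hcs.1
    have hchgtτ : ChargeEq t l τ := chain_chargeEq (dvd_refl _) hct.1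
    have huniq : ∀ m : SeqPartition, m.size = l.size → ChargeEq s l m → ChargeEq t l m →
        m = l := by
      intro m hmsz hchs hcht
      have hmem : m ∈ {l : SeqPartition | l.size = n ∧ SeqPartition.HasCore s l σ ∧
          SeqPartition.HasCore t l τ} := by
        refine ⟨by omega, ?_, ?_⟩
        · exact (hasCore_iff_chargeEq hs0 hσs).mpr
            (chargeEq_trans (chargeEq_symm hchs) hchgsσ)
        · exact (hasCore_iff_chargeEq ht0 hτt).mpr
            (chargeEq_trans (chargeEq_symm hcht) hchgtτ)
      rw [hl] at hmem
      exact hmem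
    -- l is st-flush
    have hfl : ∀ b ∈ l.betaSet, b - ((s*t:ℕ):ℤ) ∈ l.betaSet :=
      unique_implies_flush hs ht huniq
    have hfl' : ∀ b ∈ l.betaSet, b - ((t*s:ℕ):ℤ) ∈ l.betaSet := by
      rw [Nat.mul_comm t s]; exact hfl
    -- σ and τ are st-flush
    have hτsc : ∀ b ∈ τ.betaSet, b - (s:ℤ) ∈ τ.betaSet := isCore_iff_closed.mp hτs
    have hτtc : ∀ b ∈ τ.betaSet, b - (t:ℤ) ∈ τ.betaSet := isCore_iff_closed.mp hτt
    have hσsc : ∀ b ∈ σ.betaSet, b - (s:ℤ) ∈ σ.betaSet := isCore_iff_closed.mp hσs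
    have hσtc : ∀ b ∈ σ.betaSet, b - (t:ℤ) ∈ σ.betaSet := isCore_iff_closed.mp hσt
    have hfτ : ∀ b ∈ τ.betaSet, b - ((s*t:ℕ):ℤ) ∈ τ.betaSet := by
      intro b hb
      have := closed_iterate hτsc t b hb
      have hc : b - (s:ℤ)*(t:ℤ) = b - ((s*t:ℕ):ℤ) := by push_cast; ring
      rwa [hc] at this
    have hfσ : ∀ b ∈ σ.betaSet, b - ((t*s:ℕ):ℤ) ∈ σ.betaSet := by
      intro b hb
      have := closed_iterate hσtc s b hb
      have hc : b - (t:ℤ)*(s:ℤ) = b - ((t*s:ℕ):ℤ) := by push_cast; ring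
      rwa [hc] at this
    -- closure of l under -s and -t
    have hclos_s : ∀ b ∈ l.betaSet, b - (s:ℤ) ∈ l.betaSet :=
      closed_step hs0 ht0 (not_dvd_coprime hst ht) hfl hfτ hτsc hchgtτ huniq
    have hclos_t : ∀ b ∈ l.betaSet, b - (t:ℤ) ∈ l.betaSet :=
      closed_step ht0 hs0 (not_dvd_coprime hst.symm hs) hfl' hfσ hσtc hchgsσ
        (fun m h1 h2 h3 => huniq m h1 h3 h2)
    have hlσ : l = σ := core_eq_of_chargeEq hs0 hclos_s hσsc hchgsσ
    have hlτ : l = τ := core_eq_of_chargeEq ht0 hclos_t hτtc hchgtτ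
    exact ⟨hlσ ▸ hlτ, by rw [← hlσ]; omega⟩
  · rintro ⟨rfl, rfl⟩
    have hset : {l : SeqPartition | l.size = σ.size ∧ SeqPartition.HasCore s l σ ∧
        SeqPartition.HasCore t l σ} = {σ} := by
      ext l
      simp only [Set.mem_setOf_eq, Set.mem_singleton_iff]
      constructor
      · rintro ⟨hsz, hcs, _⟩
        have := chain_size hs0 hcs.1
        exact (this.2 (by omega)).symm ▸ rfl
      · rintro rfl
        exact ⟨rfl, ⟨Relation.ReflTransGen.refl, hσs⟩, ⟨Relation.ReflTransGen.refl, hσt⟩⟩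
    rw [hset]
    exact Set.ncard_singleton _


/-- for `(s,t)`-cores `σ, τ`, `|P_{σ,τ}(n)| = 1` iff `σ = τ` and
`n = |σ|`. -/
theorem stmt15 (s t : ℕ) (hs : 1 < s) (ht : 1 < t) (hst : Nat.Coprime s t)
    (σ τ : SeqPartition)
    (hσs : SeqPartition.IsCore s σ) (hσt : SeqPartition.IsCore t σ)
    (hτs : SeqPartition.IsCore s τ) (hτt : SeqPartition.IsCore t τ)
    (n : ℕ) :
    {l : SeqPartition | l.size = n ∧ SeqPartition.HasCore s l σ ∧
      SeqPartition.HasCore t l τ}.ncard = 1 ↔ (σ = τ ∧ n = σ.size) := by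
  exact stmt15_aux s t hs ht hst σ τ hσs hσt hτs hτt n
end
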